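/- arXiv:1907.11801 — 6 statements merged into one kernel-verified Lean document; each statement's English description precedes it below -/
import Mathlib

section
/- Let (W,S) be a Coxeter system and suppose v ⋖_L w, i.e., w = sv for some s ∈ S with ℓ(w) = ℓ(v) + 1. Then |D_R(w)| equals |D_R(v)| or |D_R(v)| + 1. -/
open CoxeterSystem

variable {B W : Type*} [Group W] {M : CoxeterMatrix B}

/-- A directed edge of the Bruhat graph: `v = t * u` for a reflection `t`, with length increase. -/
def bruhatEdge (cs : CoxeterSystem M W) (u v : W) : Prop :=
  ∃ t : W, cs.IsReflection t ∧ v = t * u ∧ cs.length u < cs.length v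

/-- Bruhat order: reflexive-transitive closure of Bruhat edges. -/
def bruhatLE (cs : CoxeterSystem M W) : W → W → Prop :=
  Relation.ReflTransGen (bruhatEdge cs)

/-- The standard parabolic subgroup generated by the simple reflections indexed by `I`. -/
def parabolic (cs : CoxeterSystem M W) (I : Set B) : Subgroup W :=
  Subgroup.closure (cs.simple '' I)

/-- The parabolic double coset `W_I x W_J`. -/
def doubleCoset (cs : CoxeterSystem M W) (I J : Set B) (x : W) : Set W :=
  {w | ∃ u ∈ parabolic cs I, ∃ v ∈ parabolic cs J, w = u * x * v}

set_option linter.unusedSectionVars false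


noncomputable section AuxInj

/-- A `2m`-th root of unity used as a stand-in for `exp(πi/m)`. -/
def zetaC (m : ℕ) : ℂ := Complex.exp (2 * Real.pi * Complex.I / (2 * m))

lemma zetaC_one : zetaC 1 = -1 := by
  have : (2 * (Real.pi:ℂ) * Complex.I / (2 * (1:ℕ))) = Real.pi * Complex.I := by
    push_cast; ring
  rw [zetaC, this, Complex.exp_pi_mul_I]

lemma zetaC_ne_zero (m : ℕ) : zetaC m ≠ 0 := Complex.exp_ne_zero _

lemma zetaC_prim (m : ℕ) (hm : m ≠ 0) : IsPrimitiveRoot (zetaC m) (2 * m) := by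
  have := Complex.isPrimitiveRoot_exp (2 * m) (by omega)
  rwa [show ((2 * m : ℕ) : ℂ) = 2 * m by push_cast; ring] at this

/-- The "cosine" entries of the geometric representation's bilinear form. -/
def gC (M : CoxeterMatrix B) (a b : B) : ℂ := -(zetaC (M a b) + (zetaC (M a b))⁻¹) / 2

lemma gC_symm (M : CoxeterMatrix B) (a b : B) : gC M a b = gC M b a := by
  rw [gC, gC, M.symmetric]

lemma gC_diag (M : CoxeterMatrix B) (a : B) : gC M a a = 1 := by
  rw [gC, M.diagonal, zetaC_one]
  norm_num

/-- The linear functional `v ↦ B(e_a, v)`. -/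
def laC (M : CoxeterMatrix B) (a : B) : (B →₀ ℂ) →ₗ[ℂ] ℂ :=
  Finsupp.linearCombination ℂ (gC M a)

lemma laC_single (M : CoxeterMatrix B) (a b : B) :
    laC M a (Finsupp.single b 1) = gC M a b := by
  simp [laC, Finsupp.linearCombination_single]

/-- The geometric reflection attached to `a`. -/
def sigmaC (M : CoxeterMatrix B) (a : B) : Module.End ℂ (B →₀ ℂ) :=
  LinearMap.id - LinearMap.smulRight ((2:ℂ) • laC M a) (Finsupp.single a 1)

lemma sigmaC_apply (M : CoxeterMatrix B) (a : B) (v : B →₀ ℂ) :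
    sigmaC M a v = v - (2 * laC M a v) • Finsupp.single a 1 := by
  simp [sigmaC, LinearMap.sub_apply, LinearMap.smulRight_apply, smul_smul]

lemma sigmaC_fix (M : CoxeterMatrix B) (a : B) (v : B →₀ ℂ) (h : laC M a v = 0) :
    sigmaC M a v = v := by
  rw [sigmaC_apply, h]; simp

lemma sigmaC_single_self (M : CoxeterMatrix B) (a : B) :
    sigmaC M a (Finsupp.single a 1) = -Finsupp.single a 1 := by
  rw [sigmaC_apply, laC_single, gC_diag]
  ext c
  simp only [Finsupp.sub_apply, Finsupp.smul_apply, Finsupp.single_apply, Finsupp.neg_apply,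
    smul_eq_mul]
  ring

lemma sigmaC_single (M : CoxeterMatrix B) (a b : B) :
    sigmaC M a (Finsupp.single b 1)
      = Finsupp.single b 1 - (2 * gC M a b) • Finsupp.single a 1 := by
  rw [sigmaC_apply, laC_single]

lemma sigmaC_invol (M : CoxeterMatrix B) (a : B) (v : B →₀ ℂ) :
    sigmaC M a (sigmaC M a v) = v := by
  rw [sigmaC_apply, sigmaC_apply]
  rw [map_sub, map_smul, laC_single, gC_diag]
  ext c
  simp only [map_sub, map_smul, laC_single, gC_diag, Finsupp.sub_apply, Finsupp.smul_apply,
    Finsupp.single_apply, smul_eq_mul]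
  ring

private lemma pow_fix (f : Module.End ℂ (B →₀ ℂ)) (v : B →₀ ℂ) (h : f v = v) (k : ℕ) :
    (f ^ k) v = v := by
  induction k with
  | zero => simp
  | succ k ih => rw [pow_succ', Module.End.mul_apply, ih, h]

private lemma pow_eigen (f : Module.End ℂ (B →₀ ℂ)) (c : ℂ) (v : B →₀ ℂ)
    (h : f v = c • v) (k : ℕ) : (f ^ k) v = c ^ k • v := by
  induction k with
  | zero => simp
  | succ k ih => rw [pow_succ', Module.End.mul_apply, ih, map_smul, h, smul_smul, pow_succ', mul_comm]


lemma sigmaC_mul_pow (M : CoxeterMatrix B) (a b : B) (h2 : 2 ≤ M a b) :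
    (sigmaC M a * sigmaC M b) ^ (M a b) = 1 := by
  have hab : a ≠ b := by
    intro h; rw [h, M.diagonal] at h2; omega
  set m := M a b with hm
  have hζ0 : zetaC m ≠ 0 := zetaC_ne_zero m
  set ζ := zetaC m with hζdef
  have hprim : IsPrimitiveRoot ζ (2 * m) := zetaC_prim m (by omega)
  have hpow : ζ ^ (2 * m) = 1 := hprim.pow_eq_one
  have hζ2 : ζ ^ 2 ≠ 1 := hprim.pow_ne_one_of_pos_of_lt (by norm_num) (by omega)
  have hζζ : ζ * ζ⁻¹ = 1 := mul_inv_cancel₀ hζ0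
  have hne : ζ - ζ⁻¹ ≠ 0 := by
    intro h
    exact hζ2 (by linear_combination ζ * h + hζζ)
  set g : ℂ := gC M a b with hgdef
  have hg2 : 2 * g + ζ + ζ⁻¹ = 0 := by rw [hgdef, gC, ← hm, ← hζdef]; ring
  have hgba : gC M b a = g := gC_symm M b a
  set ea : B →₀ ℂ := Finsupp.single a 1 with hea
  set eb : B →₀ ℂ := Finsupp.single b 1 with heb
  -- action on the plane
  have keya : ∀ x y : ℂ, sigmaC M a (x • ea + y • eb) = (-x - 2*g*y) • ea + y • eb := by
    intro x y
    rw [map_add, map_smul, map_smul, hea, heb, sigmaC_single_self, sigmaC_single, ← hgdef]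
    ext c
    simp only [Finsupp.add_apply, Finsupp.sub_apply, Finsupp.smul_apply, Finsupp.neg_apply,
      smul_eq_mul]
    ring
  have keyb : ∀ x y : ℂ, sigmaC M b (x • ea + y • eb) = x • ea + (-y - 2*g*x) • eb := by
    intro x y
    rw [map_add, map_smul, map_smul, hea, heb, sigmaC_single_self, sigmaC_single, hgba]
    ext c
    simp only [Finsupp.add_apply, Finsupp.sub_apply, Finsupp.smul_apply, Finsupp.neg_apply,
      smul_eq_mul]
    ring
  have hcombo : ∀ x₁ y₁ x₂ y₂ : ℂ, x₁ = x₂ → y₁ = y₂ →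
      x₁ • ea + y₁ • eb = x₂ • ea + y₂ • eb := by
    intro x₁ y₁ x₂ y₂ h h'; rw [h, h']
  have hsmul : ∀ c x y : ℂ, c • (x • ea + y • eb) = (c*x) • ea + (c*y) • eb := by
    intro c x y; rw [smul_add, smul_smul, smul_smul]
  set vp : B →₀ ℂ := (1:ℂ) • ea + ζ⁻¹ • eb with hvp
  set vm : B →₀ ℂ := (1:ℂ) • ea + ζ • eb with hvm
  set ρ : Module.End ℂ (B →₀ ℂ) := sigmaC M a * sigmaC M b with hρ
  have hρvp : ρ vp = (ζ^2) • vp := by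
    have h1 : -ζ⁻¹ - 2*g*1 = ζ := by linear_combination -hg2
    rw [hρ, Module.End.mul_apply, hvp, keyb, h1, keya, hsmul]
    exact hcombo _ _ _ _ (by linear_combination (-ζ) * hg2 + hζζ)
      (by linear_combination (-ζ) * hζζ)
  have hρvm : ρ vm = ((ζ^2)⁻¹) • vm := by
    have h1 : -ζ - 2*g*1 = ζ⁻¹ := by linear_combination -hg2
    have hz2 : (ζ^2)⁻¹ = ζ⁻¹ * ζ⁻¹ := by rw [pow_two, mul_inv]
    rw [hρ, Module.End.mul_apply, hvm, keyb, h1, keya, hsmul, hz2]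
    exact hcombo _ _ _ _ (by linear_combination (-ζ⁻¹) * hg2 + hζζ)
      (by linear_combination (-ζ⁻¹) * hζζ)
  have hρmvp : (ρ ^ m) vp = vp := by
    rw [pow_eigen ρ (ζ^2) vp hρvp m, ← pow_mul, hpow, one_smul]
  have hρmvm : (ρ ^ m) vm = vm := by
    rw [pow_eigen ρ ((ζ^2)⁻¹) vm hρvm m, inv_pow, ← pow_mul, hpow, inv_one, one_smul]
  have hsub : vm - vp = (ζ - ζ⁻¹) • eb := by
    rw [hvm, hvp]
    ext c
    simp only [Finsupp.add_apply, Finsupp.sub_apply, Finsupp.smul_apply, smul_eq_mul]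
    ring
  have hρmeb : (ρ ^ m) eb = eb := by
    have h1 : (ρ ^ m) ((ζ - ζ⁻¹) • eb) = (ζ - ζ⁻¹) • eb := by
      rw [← hsub, map_sub, hρmvm, hρmvp]
    rw [map_smul] at h1
    exact smul_right_injective _ hne h1
  have hρmea : (ρ ^ m) ea = ea := by
    have h1 : ea = vp - ζ⁻¹ • eb := by rw [hvp, one_smul]; abel
    rw [h1, map_sub, map_smul, hρmvp, hρmeb]
  -- general vector
  apply LinearMap.ext
  intro v
  rw [Module.End.one_apply]
  set p : ℂ := laC M a v with hp
  set q : ℂ := laC M b v with hq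
  set d : ℂ := 1 - g^2 with hd
  have hdne : d ≠ 0 := by
    intro h
    have h' : (1:ℂ) - g^2 = 0 := by rw [← hd]; exact h
    have h6 : (ζ - ζ⁻¹)^2 = 0 := by
      linear_combination (ζ + ζ⁻¹ - 2*g) * hg2 - 4*hζζ - 4*h'
    exact hne (pow_eq_zero_iff (two_ne_zero)|>.mp h6)
  have hd' : (1:ℂ) - g^2 ≠ 0 := by rw [← hd]; exact hdne
  set x : ℂ := (p - g*q)/d with hx
  set y : ℂ := (q - g*p)/d with hy
  set u : B →₀ ℂ := v - x • ea - y • eb with hu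
  have hua : laC M a u = 0 := by
    rw [hu, map_sub, map_sub, map_smul, map_smul, hea, heb, laC_single, laC_single,
      gC_diag, ← hgdef, ← hp]
    rw [hx, hy, hd]
    field_simp
    linear_combination (-p) * mul_inv_cancel₀ hd'
  have hub : laC M b u = 0 := by
    rw [hu, map_sub, map_sub, map_smul, map_smul, hea, heb, laC_single, laC_single,
      gC_diag, hgba, ← hq]
    rw [hx, hy, hd]
    field_simp
    linear_combination (-q) * mul_inv_cancel₀ hd'
  have hufix : ρ u = u := by
    rw [hρ, Module.End.mul_apply, sigmaC_fix M b u hub, sigmaC_fix M a u hua]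
  have hmu : (ρ ^ m) u = u := pow_fix ρ u hufix m
  have hv : v = u + x • ea + y • eb := by rw [hu]; abel
  rw [hv, map_add, map_add, map_smul, map_smul, hmu, hρmea, hρmeb]


lemma isLiftable_sigmaC (M : CoxeterMatrix B) : M.IsLiftable (fun a => sigmaC M a) := by
  intro a b
  rcases Nat.lt_or_ge (M a b) 2 with h | h
  · interval_cases h' : M.M a b
    · exact pow_zero _
    · have hab : a = b := by
        by_contra hne
        exact M.off_diagonal a b hne h'
      subst hab
      rw [pow_one]
      apply LinearMap.ext
      intro v
      rw [Module.End.mul_apply, Module.End.one_apply]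
      exact sigmaC_invol M a v
  · exact sigmaC_mul_pow M a b h

theorem CoxeterSystem.simple_injective' (cs : CoxeterSystem M W) :
    Function.Injective cs.simple := by
  intro i j hij
  by_contra hne
  have h := congrArg (cs.lift ⟨fun a => sigmaC M a, isLiftable_sigmaC M⟩) hij
  rw [cs.lift_apply_simple, cs.lift_apply_simple] at h
  have h2 := congrArg (fun f : Module.End ℂ (B →₀ ℂ) => f (Finsupp.single i 1) i) h
  simp only [sigmaC_single_self, sigmaC_single] at h2
  rw [Finsupp.neg_apply, Finsupp.sub_apply, Finsupp.smul_apply] at h2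
  classical
  rw [Finsupp.single_apply, Finsupp.single_apply] at h2
  rw [if_pos rfl, if_neg (fun hc => hne hc.symm)] at h2
  norm_num at h2

end AuxInj


noncomputable section AuxFlip

open Classical in
/-- The "flip" map attached to a simple reflection, acting on `W × ZMod 2`. -/
def tauF (cs : CoxeterSystem M W) (a : B) : Function.End (W × ZMod 2) :=
  fun p => (cs.simple a * p.1 * cs.simple a, p.2 + if p.1 = cs.simple a then 1 else 0)

lemma end_mul_apply {X : Type*} (f g : Function.End X) (p : X) : (f * g) p = f (g p) := rfl

lemma end_one_apply {X : Type*} (p : X) : (1 : Function.End X) p = p := rfl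

open Classical in
lemma tauF_apply (cs : CoxeterSystem M W) (a : B) (t : W) (ε : ZMod 2) :
    tauF cs a (t, ε) = (cs.simple a * t * cs.simple a, ε + if t = cs.simple a then 1 else 0) :=
  rfl

open Classical in
lemma tau_pow (cs : CoxeterSystem M W) (a b : B) (k : ℕ) (t : W) (ε : ZMod 2) :
    ((tauF cs a * tauF cs b) ^ k) (t, ε) =
      ((cs.simple a * cs.simple b) ^ k * t * (cs.simple b * cs.simple a) ^ k,
        ε + ∑ n ∈ Finset.range (2 * k),
          if t = (cs.simple b * cs.simple a) ^ n * cs.simple b then (1 : ZMod 2) else 0) := by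
  have hgen : ∀ x y : W, ((cs.simple a * cs.simple b) * x * (cs.simple b * cs.simple a) = y)
      ↔ (x = (cs.simple b * cs.simple a) * y * (cs.simple a * cs.simple b)) := by
    intro x y
    constructor
    · rintro rfl
      simp [mul_assoc, cs.simple_mul_simple_cancel_left, cs.simple_mul_simple_self]
    · rintro rfl
      simp [mul_assoc, cs.simple_mul_simple_cancel_left, cs.simple_mul_simple_self]
  induction k generalizing t ε with
  | zero => simp [end_one_apply]
  | succ k ih =>
    have key : ∀ n : ℕ, (cs.simple b * cs.simple a) * ((cs.simple b * cs.simple a) ^ n * cs.simple b)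
        * (cs.simple a * cs.simple b) = (cs.simple b * cs.simple a) ^ (n + 2) * cs.simple b := by
      intro n
      have h1 : (cs.simple b * cs.simple a) ^ (n+2) = (cs.simple b * cs.simple a) ^ (n+1) * (cs.simple b * cs.simple a) := pow_succ _ _
      have h2 : (cs.simple b * cs.simple a) ^ (n+1) = (cs.simple b * cs.simple a) * (cs.simple b * cs.simple a) ^ n := pow_succ' _ _
      rw [h1, h2]
      simp [mul_assoc]
    have hstep : (tauF cs a * tauF cs b) (t, ε) =
        ((cs.simple a * cs.simple b) * t * (cs.simple b * cs.simple a),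
          ε + ((if t = (cs.simple b * cs.simple a) ^ 0 * cs.simple b then (1 : ZMod 2) else 0)
            + (if t = (cs.simple b * cs.simple a) ^ 1 * cs.simple b then (1 : ZMod 2) else 0))) := by
      rw [end_mul_apply, tauF_apply, tauF_apply]
      simp only [Prod.mk.injEq]
      constructor
      · simp [mul_assoc]
      · have h1 : (t = cs.simple b) ↔ (t = (cs.simple b * cs.simple a) ^ 0 * cs.simple b) := by
          rw [pow_zero, one_mul]
        have h2 : (cs.simple b * t * cs.simple b = cs.simple a)
            ↔ (t = (cs.simple b * cs.simple a) ^ 1 * cs.simple b) := by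
          rw [pow_one]
          constructor
          · intro h
            rw [← h]
            simp [mul_assoc, cs.simple_mul_simple_cancel_left, cs.simple_mul_simple_self]
          · rintro rfl
            simp [mul_assoc, cs.simple_mul_simple_cancel_left, cs.simple_mul_simple_self]
        rw [if_congr h1 rfl rfl, if_congr h2 rfl rfl]
        ring
    rw [pow_succ, end_mul_apply, hstep, ih]
    simp only [Prod.mk.injEq]
    constructor
    · rw [pow_succ, pow_succ']
      simp [mul_assoc]
    · have hc : ∀ n : ℕ,
          ((cs.simple a * cs.simple b) * t * (cs.simple b * cs.simple a)
            = (cs.simple b * cs.simple a) ^ n * cs.simple b)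
          ↔ (t = (cs.simple b * cs.simple a) ^ (n + 2) * cs.simple b) := by
        intro n
        rw [hgen, key]
      have hsum : ∑ n ∈ Finset.range (2 * k),
            (if (cs.simple a * cs.simple b) * t * (cs.simple b * cs.simple a)
              = (cs.simple b * cs.simple a) ^ n * cs.simple b then (1 : ZMod 2) else 0)
          = ∑ n ∈ Finset.range (2 * k),
            (if t = (cs.simple b * cs.simple a) ^ (n + 2) * cs.simple b
              then (1 : ZMod 2) else 0) :=
        Finset.sum_congr rfl (fun n _ => if_congr (hc n) rfl rfl)
      rw [hsum]
      have h2k : 2 * (k + 1) = (2 * k + 1) + 1 := by ring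
      rw [h2k, Finset.sum_range_succ', Finset.sum_range_succ']
      ring

lemma isLiftable_tauF (cs : CoxeterSystem M W) : M.IsLiftable (tauF cs) := by
  classical
  intro a b
  funext p
  obtain ⟨t, ε⟩ := p
  rw [tau_pow, end_one_apply]
  have hr : (cs.simple a * cs.simple b) ^ M a b = 1 := cs.simple_mul_simple_pow a b
  have hr' : (cs.simple b * cs.simple a) ^ M a b = 1 := cs.simple_mul_simple_pow' a b
  have hsum : ∑ n ∈ Finset.range (2 * M a b),
      (if t = (cs.simple b * cs.simple a) ^ n * cs.simple b then (1 : ZMod 2) else 0) = 0 := by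
    rw [two_mul, Finset.sum_range_add]
    have : ∀ n : ℕ, (cs.simple b * cs.simple a) ^ (M a b + n)
        = (cs.simple b * cs.simple a) ^ n := by
      intro n
      rw [pow_add, hr', one_mul]
    have heq : ∑ n ∈ Finset.range (M a b),
        (if t = (cs.simple b * cs.simple a) ^ (M a b + n) * cs.simple b
          then (1 : ZMod 2) else 0)
        = ∑ n ∈ Finset.range (M a b),
        (if t = (cs.simple b * cs.simple a) ^ n * cs.simple b then (1 : ZMod 2) else 0) :=
      Finset.sum_congr rfl (fun n _ => by rw [this n])
    rw [heq, CharTwo.add_self_eq_zero]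
  rw [hr, hr', hsum]
  simp

/-- The flip representation of the Coxeter group. -/
def phiF (cs : CoxeterSystem M W) : W →* Function.End (W × ZMod 2) :=
  cs.lift ⟨tauF cs, isLiftable_tauF cs⟩

lemma phiF_simple (cs : CoxeterSystem M W) (a : B) : phiF cs (cs.simple a) = tauF cs a :=
  cs.lift_apply_simple (isLiftable_tauF cs) a

open Classical in
/-- Mod-2 indicator sum of occurrences of `t` in a list. -/
def indSum (l : List W) (t : W) : ZMod 2 := (l.map (fun x => if x = t then (1 : ZMod 2) else 0)).sum

lemma indSum_nil (t : W) : indSum ([] : List W) t = 0 := rfl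

open Classical in
lemma indSum_cons (x : W) (l : List W) (t : W) :
    indSum (x :: l) t = (if x = t then (1 : ZMod 2) else 0) + indSum l t := by
  simp [indSum]

open Classical in
lemma indSum_nodup (l : List W) (hl : l.Nodup) (t : W) :
    indSum l t = if t ∈ l then 1 else 0 := by
  induction l with
  | nil => simp [indSum_nil]
  | cons x l ih =>
    rw [indSum_cons, ih hl.of_cons]
    rcases List.nodup_cons.mp hl with ⟨hx, -⟩
    by_cases hxt : x = t
    · subst hxt
      rw [if_pos rfl, if_neg hx, if_pos List.mem_cons_self]
      ring
    · rw [if_neg hxt]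
      by_cases htl : t ∈ l
      · rw [if_pos htl, if_pos (List.mem_cons_of_mem x htl)]
        ring
      · rw [if_neg htl, if_neg (by rw [List.mem_cons]; push_neg; exact ⟨fun h => hxt h.symm, htl⟩)]
        ring

open Classical in
lemma phiF_wordProd (cs : CoxeterSystem M W) (ω : List B) (t : W) (ε : ZMod 2) :
    phiF cs (cs.wordProd ω) (t, ε) =
      (cs.wordProd ω * t * (cs.wordProd ω)⁻¹, ε + indSum (cs.rightInvSeq ω) t) := by
  induction ω generalizing t ε with
  | nil => simp [end_one_apply, indSum_nil]
  | cons i ω ih =>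
    rw [cs.wordProd_cons, map_mul, phiF_simple, end_mul_apply, ih, tauF_apply]
    have hris : cs.rightInvSeq (i :: ω)
        = ((cs.wordProd ω)⁻¹ * cs.simple i * cs.wordProd ω) :: cs.rightInvSeq ω := rfl
    rw [hris, indSum_cons]
    simp only [Prod.mk.injEq]
    constructor
    · rw [mul_inv_rev, cs.inv_simple]
      simp [mul_assoc]
    · have hcond : (cs.wordProd ω * t * (cs.wordProd ω)⁻¹ = cs.simple i)
          ↔ ((cs.wordProd ω)⁻¹ * cs.simple i * cs.wordProd ω = t) := by
        constructor
        · intro h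
          rw [← h]
          simp [mul_assoc]
        · intro h
          rw [← h]
          simp [mul_assoc]
      rw [if_congr hcond rfl rfl]
      ring

lemma mem_ris_iff_of_reduced (cs : CoxeterSystem M W) {ω ω' : List B}
    (hω : cs.IsReduced ω) (hω' : cs.IsReduced ω') (hp : cs.wordProd ω = cs.wordProd ω')
    (t : W) : t ∈ cs.rightInvSeq ω ↔ t ∈ cs.rightInvSeq ω' := by
  classical
  have h1 := phiF_wordProd cs ω t 0
  have h2 := phiF_wordProd cs ω' t 0
  rw [hp] at h1
  rw [h1] at h2
  have h3 := congrArg Prod.snd h2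
  simp only at h3
  rw [indSum_nodup _ (hω.nodup_rightInvSeq) t, indSum_nodup _ (hω'.nodup_rightInvSeq) t] at h3
  by_cases ha : t ∈ cs.rightInvSeq ω <;> by_cases hb : t ∈ cs.rightInvSeq ω'
  · simp [ha, hb]
  · rw [if_pos ha, if_neg hb] at h3
    exact absurd (add_left_cancel h3) one_ne_zero
  · rw [if_neg ha, if_pos hb] at h3
    exact absurd (add_left_cancel h3).symm one_ne_zero
  · simp [ha, hb]


lemma mem_ris_of_rightDescent (cs : CoxeterSystem M W) {u : W} {j : B} {ω : List B}
    (hd : cs.IsRightDescent u j) (hω : cs.IsReduced ω) (hu : cs.wordProd ω = u) :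
    cs.simple j ∈ cs.rightInvSeq ω := by
  obtain ⟨τ, hτred, hτ⟩ := cs.exists_reduced_word' (u * cs.simple j)
  have hlen : cs.length (u * cs.simple j) + 1 = cs.length u := cs.isRightDescent_iff.mp hd
  have hπ : cs.wordProd (τ.concat j) = u := by
    rw [cs.wordProd_concat, ← hτ, mul_assoc, cs.simple_mul_simple_self, mul_one]
  have hred' : cs.IsReduced (τ.concat j) := by
    unfold CoxeterSystem.IsReduced
    rw [hπ, List.length_concat, ← hτred, ← hτ, hlen]
  have hmem : cs.simple j ∈ cs.rightInvSeq (τ.concat j) := by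
    rw [cs.rightInvSeq_concat]
    simp
  exact (mem_ris_iff_of_reduced cs hred' hω (by rw [hπ, hu]) _).mp hmem

lemma mem_lis_of_leftDescent (cs : CoxeterSystem M W) {u : W} {i : B} {ω : List B}
    (hd : cs.IsLeftDescent u i) (hω : cs.IsReduced ω) (hu : cs.wordProd ω = u) :
    cs.simple i ∈ cs.leftInvSeq ω := by
  have hd' : cs.IsRightDescent u⁻¹ i := cs.isRightDescent_inv_iff.mpr hd
  have h := mem_ris_of_rightDescent cs hd' ((cs.isReduced_reverse_iff ω).mpr hω)
    (by rw [cs.wordProd_reverse, hu])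
  rw [cs.rightInvSeq_reverse, List.mem_reverse] at h
  exact h

/-- The key lifting/exchange step along a left cover. -/
lemma cover_exchange (cs : CoxeterSystem M W) {v w : W} {i j : B}
    (hw : w = cs.simple i * v) (hl : cs.length w = cs.length v + 1)
    (hwj : cs.IsRightDescent w j) (hvj : ¬ cs.IsRightDescent v j) :
    w * cs.simple j = v := by
  have hvj' : cs.length (v * cs.simple j) = cs.length v + 1 := cs.not_isRightDescent_iff.mp hvj
  obtain ⟨ω, hωr, hωp⟩ := cs.exists_reduced_word' v
  have hπ' : cs.wordProd (ω.concat j) = v * cs.simple j := by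
    rw [cs.wordProd_concat, ← hωp]
  have hred' : cs.IsReduced (ω.concat j) := by
    unfold CoxeterSystem.IsReduced
    rw [hπ', List.length_concat, hvj', ← hωr, ← hωp]
  have hld : cs.IsLeftDescent (v * cs.simple j) i := by
    unfold CoxeterSystem.IsLeftDescent
    have h1 : cs.simple i * (v * cs.simple j) = w * cs.simple j := by
      rw [hw, mul_assoc]
    rw [h1, hvj', ← hl]
    exact hwj
  have hmem := mem_lis_of_leftDescent cs hld hred' hπ'
  rw [cs.leftInvSeq_concat] at hmem
  rw [List.concat_eq_append, List.mem_append, List.mem_singleton] at hmem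
  rcases hmem with hmem | hmem
  · exfalso
    have h2 := (cs.isLeftInversion_of_mem_leftInvSeq hωr hmem).2
    rw [← hωp, ← hw, hl] at h2
    omega
  · rw [← hωp] at hmem
    rw [hw, mul_assoc, ← cs.simple_mul_simple_cancel_left (i := i) (w := v), ← mul_assoc, ← mul_assoc, hmem]
    simp [mul_assoc, cs.simple_mul_simple_self]


theorem rightDescent_card_of_left_cover' [Finite B]
    (cs : CoxeterSystem M W) (v w : W) (i : B)
    (hw : w = cs.simple i * v) (hl : cs.length w = cs.length v + 1) :
    Set.ncard {j : B | cs.IsRightDescent w j} = Set.ncard {j : B | cs.IsRightDescent v j} ∨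
    Set.ncard {j : B | cs.IsRightDescent w j} = Set.ncard {j : B | cs.IsRightDescent v j} + 1 := by
  classical
  set A : Set B := {j : B | cs.IsRightDescent v j} with hA
  set Bs : Set B := {j : B | cs.IsRightDescent w j} with hBs
  set C : Set B := {j : B | cs.simple j = w⁻¹ * v} with hC
  have hCd : ∀ j ∈ C, w * cs.simple j = v := by
    intro j hj
    rw [hC] at hj
    rw [hj.out, mul_inv_cancel_left]
  have hAB : A ⊆ Bs := by
    intro j hj
    have hdj : cs.length (v * cs.simple j) + 1 = cs.length v := cs.isRightDescent_iff.mp hj.out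
    have h1 : w * cs.simple j = cs.simple i * (v * cs.simple j) := by rw [hw, mul_assoc]
    have h2 := cs.length_simple_mul (v * cs.simple j) i
    show cs.length (w * cs.simple j) < cs.length w
    rw [h1]
    omega
  have hCB : C ⊆ Bs := by
    intro j hj
    show cs.length (w * cs.simple j) < cs.length w
    rw [hCd j hj]
    omega
  have hBAC : Bs ⊆ A ∪ C := by
    intro j hj
    by_cases hja : j ∈ A
    · exact Set.mem_union_left _ hja
    · right
      have := cover_exchange cs hw hl hj.out hja
      show cs.simple j = w⁻¹ * v
      rw [← this, inv_mul_cancel_left]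
  have hBeq : Bs = A ∪ C := Set.Subset.antisymm hBAC (Set.union_subset hAB hCB)
  have hdisj : Disjoint A C := by
    rw [Set.disjoint_left]
    intro j hja hjc
    have h1 : v * cs.simple j = w := by
      rw [← hCd j hjc, mul_assoc, cs.simple_mul_simple_self, mul_one]
    have h2 : cs.length (v * cs.simple j) < cs.length v := hja.out
    rw [h1, hl] at h2
    omega
  rw [hBeq, Set.ncard_union_eq hdisj (Set.toFinite A) (Set.toFinite C)]
  rcases Set.eq_empty_or_nonempty C with h | ⟨j0, hj0⟩
  · rw [h, Set.ncard_empty]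
    left
    omega
  · have hsingle : C = {j0} := by
      apply Set.eq_singleton_iff_unique_mem.mpr
      refine ⟨hj0, fun j' hj' => ?_⟩
      exact cs.simple_injective' (by rw [hj'.out, hj0.out])
    rw [hsingle, Set.ncard_singleton]
    right
    rfl

end AuxFlip


/-- Along a left weak order cover, the right descent number increases by at most one. -/
theorem rightDescent_card_of_left_cover [Finite B]
    (cs : CoxeterSystem M W) (v w : W) (i : B)
    (hw : w = cs.simple i * v) (hl : cs.length w = cs.length v + 1) :
    Set.ncard {j : B | cs.IsRightDescent w j} = Set.ncard {j : B | cs.IsRightDescent v j} ∨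
    Set.ncard {j : B | cs.IsRightDescent w j} = Set.ncard {j : B | cs.IsRightDescent v j} + 1 :=
  rightDescent_card_of_left_cover' cs v w i hw hl
end

section
/- Let W be a finite Coxeter group and X a parabolic double coset whose maximal element is w, such that X is covered in the reverse-containment order on parabolic double cosets by the singleton {w}. Then X has exactly two elements, i.e., X = {w, v} where v ⋖ w, and moreover X equals {w, sw} for some s ∈ D_L(w) or {w, ws} for some s ∈ D_R(w). -/
open CoxeterSystem

variable {B W : Type*} [Group W] {M : CoxeterMatrix B}

lemma doubleCoset_eq_of_mem (cs : CoxeterSystem M W) {I J : Set B} {x w : W}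
    (h : w ∈ doubleCoset cs I J x) :
    doubleCoset cs I J x = doubleCoset cs I J w := by
  obtain ⟨a, ha, b, hb, hw⟩ := h
  ext z
  constructor
  · rintro ⟨u, hu, v, hv, rfl⟩
    exact ⟨u * a⁻¹, mul_mem hu (inv_mem ha), b⁻¹ * v, mul_mem (inv_mem hb) hv, by
      rw [hw]; group⟩
  · rintro ⟨u, hu, v, hv, rfl⟩
    exact ⟨u * a, mul_mem hu ha, b * v, mul_mem hb hv, by rw [hw]; group⟩

lemma pow_invol {s : W} (hs : s * s = 1) : ∀ m : ℕ, s ^ m = 1 ∨ s ^ m = s := by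
  intro m
  induction m with
  | zero => left; simp
  | succ k ih =>
    rcases ih with h | h
    · right; rw [pow_succ, h, one_mul]
    · left; rw [pow_succ, h, hs]

lemma zpow_invol {s : W} (hs : s * s = 1) (n : ℤ) : s ^ n = 1 ∨ s ^ n = s := by
  have hinv : s⁻¹ = s := inv_eq_of_mul_eq_one_left hs
  rcases Int.natAbs_eq n with h | h
  · rw [h, zpow_natCast]; exact pow_invol hs _
  · rw [h, zpow_neg, zpow_natCast]
    rcases pow_invol hs n.natAbs with h' | h'
    · left; rw [h']; simp
    · right; rw [h', hinv]

/-- `W_{i} w = {w, s_i w}`. -/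
lemma doubleCoset_singleton_left (cs : CoxeterSystem M W) (i : B) (w : W) :
    doubleCoset cs {i} ∅ w = {w, cs.simple i * w} := by
  ext z
  constructor
  · rintro ⟨u, hu, v, hv, rfl⟩
    rw [parabolic, Set.image_empty, Subgroup.closure_empty, Subgroup.mem_bot] at hv
    rw [parabolic, Set.image_singleton, Subgroup.mem_closure_singleton] at hu
    obtain ⟨n, rfl⟩ := hu
    rcases zpow_invol (cs.simple_mul_simple_self i) n with h | h <;> rw [h, hv] <;> simp
  · rintro (rfl | rfl)
    · exact ⟨1, one_mem _, 1, one_mem _, by simp⟩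
    · exact ⟨cs.simple i, Subgroup.subset_closure (by simp), 1, one_mem _, by simp⟩

/-- `w W_{i} = {w, w s_i}`. -/
lemma doubleCoset_singleton_right (cs : CoxeterSystem M W) (i : B) (w : W) :
    doubleCoset cs ∅ {i} w = {w, w * cs.simple i} := by
  ext z
  constructor
  · rintro ⟨u, hu, v, hv, rfl⟩
    rw [parabolic, Set.image_empty, Subgroup.closure_empty, Subgroup.mem_bot] at hu
    rw [parabolic, Set.image_singleton, Subgroup.mem_closure_singleton] at hv
    obtain ⟨n, rfl⟩ := hv
    rcases zpow_invol (cs.simple_mul_simple_self i) n with h | h <;> rw [h, hu] <;> simp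
  · rintro (rfl | rfl)
    · exact ⟨1, one_mem _, 1, one_mem _, by simp⟩
    · exact ⟨1, one_mem _, cs.simple i, Subgroup.subset_closure (by simp), by simp⟩

lemma doubleCoset_empty_empty (cs : CoxeterSystem M W) (w : W) :
    doubleCoset cs (∅ : Set B) (∅ : Set B) w = {w} := by
  ext z
  constructor
  · rintro ⟨u, hu, v, hv, rfl⟩
    rw [parabolic, Set.image_empty, Subgroup.closure_empty, Subgroup.mem_bot] at hu hv
    simp [hu, hv]
  · rintro rfl
    exact ⟨1, one_mem _, 1, one_mem _, by simp⟩

lemma simple_ne_one (cs : CoxeterSystem M W) (i : B) : cs.simple i ≠ 1 := by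
  intro h
  have := cs.length_simple i
  rw [h, cs.length_one] at this
  simp at this

/-- A parabolic double coset covered by its maximal singleton in the reverse-containment order
has exactly two elements, of the form `{w, sw}` or `{w, ws}` for a descent `s` of `w`. -/
theorem coset_covered_by_singleton [Finite W]
    (cs : CoxeterSystem M W) (X : Set W) (w : W)
    (hX : ∃ I J : Set B, ∃ x : W, X = doubleCoset cs I J x)
    (hwX : w ∈ X) (hmax : ∀ y ∈ X, cs.length y ≤ cs.length w)
    (hne : X ≠ {w})
    (hcov : ∀ Y : Set W, (∃ I J : Set B, ∃ x : W, Y = doubleCoset cs I J x) →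
      {w} ⊆ Y → Y ⊆ X → Y = {w} ∨ Y = X) :
    (∃ v : W, X = {w, v} ∧ v ≠ w ∧ cs.length v + 1 = cs.length w) ∧
    ((∃ i : B, cs.IsLeftDescent w i ∧ X = {w, cs.simple i * w}) ∨
     (∃ i : B, cs.IsRightDescent w i ∧ X = {w, w * cs.simple i})) := by
  obtain ⟨I, J, x, hXeq⟩ := hX
  have hXw : X = doubleCoset cs I J w := by
    rw [hXeq] at hwX ⊢
    exact doubleCoset_eq_of_mem cs hwX
  by_cases hI : I.Nonempty
  · obtain ⟨i, hi⟩ := hI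
    have hsw_ne : cs.simple i * w ≠ w := by
      intro h
      exact simple_ne_one cs i (mul_right_cancel (b := w) (by rw [h, one_mul]))
    have hsw_mem : cs.simple i * w ∈ X := by
      rw [hXw]
      exact ⟨cs.simple i, Subgroup.subset_closure ⟨i, hi, rfl⟩, 1, one_mem _, by simp⟩
    have hYsub : doubleCoset cs {i} ∅ w ⊆ X := by
      rw [doubleCoset_singleton_left]
      rintro z (rfl | rfl)
      · exact hwX
      · exact hsw_mem
    have hYw : ({w} : Set W) ⊆ doubleCoset cs {i} ∅ w := by
      rw [doubleCoset_singleton_left]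
      rintro z rfl
      exact Set.mem_insert _ _
    rcases hcov _ ⟨{i}, ∅, w, rfl⟩ hYw hYsub with h | h
    · exfalso
      rw [doubleCoset_singleton_left] at h
      exact hsw_ne (h ▸ Set.mem_insert_iff.mpr (Or.inr rfl) : cs.simple i * w ∈ ({w} : Set W))
    · have hX2 : X = {w, cs.simple i * w} := by
        rw [← h, doubleCoset_singleton_left]
      have hle := hmax _ hsw_mem
      have hlen : cs.length (cs.simple i * w) + 1 = cs.length w := by
        rcases cs.length_simple_mul w i with h' | h'
        · omega
        · exact h'
      have hd : cs.IsLeftDescent w i := cs.isLeftDescent_iff.mpr hlen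
      exact ⟨⟨cs.simple i * w, hX2, hsw_ne, hlen⟩, Or.inl ⟨i, hd, hX2⟩⟩
  · by_cases hJ : J.Nonempty
    · obtain ⟨j, hj⟩ := hJ
      have hsw_ne : w * cs.simple j ≠ w := by
        intro h
        exact simple_ne_one cs j (mul_left_cancel (a := w) (by rw [h, mul_one]))
      have hsw_mem : w * cs.simple j ∈ X := by
        rw [hXw]
        exact ⟨1, one_mem _, cs.simple j, Subgroup.subset_closure ⟨j, hj, rfl⟩, by simp⟩
      have hYsub : doubleCoset cs ∅ {j} w ⊆ X := by
        rw [doubleCoset_singleton_right]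
        rintro z (rfl | rfl)
        · exact hwX
        · exact hsw_mem
      have hYw : ({w} : Set W) ⊆ doubleCoset cs ∅ {j} w := by
        rw [doubleCoset_singleton_right]
        rintro z rfl
        exact Set.mem_insert _ _
      rcases hcov _ ⟨∅, {j}, w, rfl⟩ hYw hYsub with h | h
      · exfalso
        rw [doubleCoset_singleton_right] at h
        exact hsw_ne (h ▸ Set.mem_insert_iff.mpr (Or.inr rfl) : w * cs.simple j ∈ ({w} : Set W))
      · have hX2 : X = {w, w * cs.simple j} := by
          rw [← h, doubleCoset_singleton_right]
        have hle := hmax _ hsw_mem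
        have hlen : cs.length (w * cs.simple j) + 1 = cs.length w := by
          rcases cs.length_mul_simple w j with h' | h'
          · omega
          · exact h'
        have hd : cs.IsRightDescent w j := cs.isRightDescent_iff.mpr hlen
        exact ⟨⟨w * cs.simple j, hX2, hsw_ne, hlen⟩, Or.inr ⟨j, hd, hX2⟩⟩
    · exfalso
      apply hne
      rw [Set.not_nonempty_iff_eq_empty] at hI hJ
      rw [hXw, hI, hJ, doubleCoset_empty_empty]
end

section
/- Let W be a finite Coxeter group, w ∈ W, and r ∈ D_L(w). For every v ∈ W, the degree of v in the Bruhat graph on the lower interval [e, w] equals the degree of rv, i.e., deg_w(v) = deg_w(rv), where elements not in [e,w] have degree 0. -/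
open CoxeterSystem
open List
open scoped Classical

variable {B W : Type*} [Group W] {M : CoxeterMatrix B}

noncomputable section

namespace CoxeterSystem

variable (cs : CoxeterSystem M W)

local prefix:100 "s" => cs.simple
local prefix:100 "π" => cs.wordProd
local prefix:100 "ℓ" => cs.length

private lemma conj_eq_iff' (g x c : W) : g * x * g⁻¹ = c ↔ x = g⁻¹ * c * g := by
  constructor
  · rintro rfl; group
  · rintro rfl; group

/-- The function underlying the sign permutation of a simple reflection. -/
def nuFun (i : B) : W × ℤˣ → W × ℤˣ :=
  fun p => (s i * p.1 * s i, if p.1 = s i then -p.2 else p.2)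

lemma nuFun_involutive (i : B) : Function.Involutive (cs.nuFun i) := by
  rintro ⟨t, e⟩
  simp only [nuFun]
  have h1 : s i * (s i * t * s i) * s i = t := by
    rw [← mul_assoc, ← mul_assoc, cs.simple_mul_simple_self, one_mul, mul_assoc,
      cs.simple_mul_simple_self, mul_one]
  have h2 : (s i * t * s i = s i) ↔ (t = s i) := by
    constructor
    · intro h
      have h3 : t = s i * (s i * t * s i) * s i := h1.symm
      rw [h, cs.simple_mul_simple_self, one_mul] at h3
      exact h3
    · rintro rfl
      rw [cs.simple_mul_simple_self, one_mul]
  by_cases h : t = s i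
  · simp [h1, h2, h]
  · simp [h1, h2, h]

/-- The sign permutation of a simple reflection. -/
def nu (i : B) : Equiv.Perm (W × ℤˣ) := (cs.nuFun_involutive i).toPerm

lemma nu_apply (i : B) (t : W) (e : ℤˣ) :
    cs.nu i (t, e) = (s i * t * s i, if t = s i then -e else e) := rfl

lemma simple_mul_pow' (i j : B) (m : ℕ) :
    s j * (s i * s j) ^ m = ((s i * s j) ^ m)⁻¹ * s j := by
  have base : s j * (s i * s j) = (s i * s j)⁻¹ * s j := by
    rw [mul_inv_rev, cs.inv_simple, cs.inv_simple, ← mul_assoc]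
  induction m with
  | zero => simp
  | succ m ihm =>
    rw [pow_succ]
    conv_lhs => rw [← mul_assoc, ihm, mul_assoc, base, ← mul_assoc, ← mul_inv_rev, ← pow_succ']
    rw [pow_succ]

lemma conj_pow_simple (i j : B) (k l : ℕ) :
    ((s i * s j) ^ k)⁻¹ * (s j * (s i * s j) ^ l) * (s i * s j) ^ k
      = s j * (s i * s j) ^ (2 * k + l) := by
  calc ((s i * s j) ^ k)⁻¹ * (s j * (s i * s j) ^ l) * (s i * s j) ^ k
      = ((s i * s j) ^ k)⁻¹ * (((s i * s j) ^ l)⁻¹ * s j) * (s i * s j) ^ k := by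
        rw [cs.simple_mul_pow']
    _ = ((s i * s j) ^ (k + l))⁻¹ * s j * (s i * s j) ^ k := by
        rw [pow_add, mul_inv_rev]; group
    _ = s j * (s i * s j) ^ (k + l) * (s i * s j) ^ k := by
        rw [cs.simple_mul_pow' i j (k + l)]
    _ = s j * (s i * s j) ^ (2 * k + l) := by
        rw [mul_assoc, ← pow_add]; ring_nf

lemma nu_pow_apply (i j : B) (k : ℕ) (t : W) (e : ℤˣ) :
    ((cs.nu i * cs.nu j) ^ k) (t, e) =
      ((s i * s j) ^ k * t * ((s i * s j) ^ k)⁻¹,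
        (∏ l ∈ Finset.range (2 * k), if t = s j * (s i * s j) ^ l then (-1 : ℤˣ) else 1) * e) := by
  induction k with
  | zero => simp
  | succ k ih =>
    rw [pow_succ', Equiv.Perm.mul_apply, ih, Equiv.Perm.mul_apply, nu_apply]
    set u := (s i * s j) ^ k * t * ((s i * s j) ^ k)⁻¹ with hu
    rw [nu_apply]
    have h00 : ((s i * s j) ^ k)⁻¹ * s j * (s i * s j) ^ k
        = s j * (s i * s j) ^ (2 * k) := by
      have := cs.conj_pow_simple i j k 0
      rw [pow_zero, mul_one, add_zero] at this
      exact this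
    have e0 : (u = s j) ↔ t = s j * (s i * s j) ^ (2 * k) := by
      rw [hu, conj_eq_iff', h00]
    have e1 : (s j * u * s j = s i) ↔ t = s j * (s i * s j) ^ (2 * k + 1) := by
      have step1 : (s j * u * s j = s i) ↔ (u = s j * (s i * s j) ^ 1) := by
        nth_rewrite 1 [show s j * u * s j = s j * u * (s j)⁻¹ by rw [cs.inv_simple]]
        rw [conj_eq_iff', cs.inv_simple, pow_one, ← mul_assoc]
      rw [step1, hu, conj_eq_iff', cs.conj_pow_simple i j k 1]
    have hp : s j * s i = (s i * s j)⁻¹ := by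
      rw [mul_inv_rev, cs.inv_simple, cs.inv_simple]
    have fstEq : s i * (s j * u * s j) * s i
        = (s i * s j) ^ (k + 1) * t * ((s i * s j) ^ (k + 1))⁻¹ := by
      have L1 : s i * (s j * ((s i * s j) ^ k * t * ((s i * s j) ^ k)⁻¹) * s j) * s i
          = (s i * s j * (s i * s j) ^ k) * t * (s i * s j * (s i * s j) ^ k)⁻¹ := by
        simp only [mul_inv_rev, cs.inv_simple, ← mul_assoc]
      have L2 : s i * s j * (s i * s j) ^ k = (s i * s j) ^ (k + 1) := by
        rw [pow_succ']
      rw [hu, L1, L2]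
    rw [Prod.mk.injEq]
    constructor
    · exact fstEq
    · rw [show 2 * (k + 1) = (2 * k) + 1 + 1 by ring, Finset.prod_range_succ,
        Finset.prod_range_succ]
      by_cases h0 : u = s j <;> by_cases h1 : s j * u * s j = s i
      · rw [if_pos h1, if_pos h0, if_pos (e0.mp h0), if_pos (e1.mp h1)]
        simp [mul_neg, neg_mul, mul_one, one_mul, neg_neg, mul_assoc]
      · rw [if_neg h1, if_pos h0, if_pos (e0.mp h0), if_neg (h1 ∘ e1.mpr)]
        simp [mul_neg, neg_mul, mul_one, one_mul, neg_neg, mul_assoc]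
      · rw [if_pos h1, if_neg h0, if_neg (h0 ∘ e0.mpr), if_pos (e1.mp h1)]
        simp [mul_neg, neg_mul, mul_one, one_mul, neg_neg, mul_assoc]
      · rw [if_neg h1, if_neg h0, if_neg (h0 ∘ e0.mpr), if_neg (h1 ∘ e1.mpr)]
        simp [mul_neg, neg_mul, mul_one, one_mul, neg_neg, mul_assoc]

lemma nu_liftable : M.IsLiftable (cs.nu) := by
  intro i j
  apply Equiv.ext
  rintro ⟨t, e⟩
  rw [cs.nu_pow_apply i j (M i j) t e, Equiv.Perm.one_apply, Prod.mk.injEq]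
  constructor
  · rw [cs.simple_mul_simple_pow i j]
    simp
  · have hper : ∀ l, (if t = s j * (s i * s j) ^ (M i j + l) then (-1 : ℤˣ) else 1)
        = (if t = s j * (s i * s j) ^ l then (-1 : ℤˣ) else 1) := by
      intro l
      rw [pow_add, cs.simple_mul_simple_pow i j, one_mul]
    rw [two_mul, Finset.prod_range_add]
    simp only [hper]
    rw [Int.units_mul_self, one_mul]


/-- The sign representation on reflections. -/
def sgnPerm : W →* Equiv.Perm (W × ℤˣ) := cs.lift ⟨cs.nu, cs.nu_liftable⟩

/-- The reflection cocycle. -/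
def eta (w t : W) : ℤˣ := (cs.sgnPerm w (t, 1)).2

lemma sgnPerm_simple (i : B) : cs.sgnPerm (s i) = cs.nu i :=
  cs.lift_apply_simple cs.nu_liftable i

lemma sgnPerm_apply (w : W) : ∀ (t : W) (e : ℤˣ),
    cs.sgnPerm w (t, e) = (w * t * w⁻¹, cs.eta w t * e) := by
  induction w using cs.simple_induction_left with
  | one =>
    intro t e
    simp [eta]
  | mul_simple_left w i ih =>
    intro t e
    have hmul : cs.sgnPerm (s i * w) = cs.sgnPerm (s i) * cs.sgnPerm w := map_mul _ _ _
    have key : ∀ e' : ℤˣ, cs.sgnPerm (s i * w) (t, e')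
        = ((s i * w) * t * (s i * w)⁻¹,
            (if w * t * w⁻¹ = s i then -(cs.eta w t) else cs.eta w t) * e') := by
      intro e'
      rw [hmul, Equiv.Perm.mul_apply, ih t e', sgnPerm_simple, nu_apply]
      rw [Prod.mk.injEq]
      constructor
      · rw [mul_inv_rev, cs.inv_simple]
        simp only [mul_assoc]
      · by_cases h : w * t * w⁻¹ = s i
        · rw [if_pos h, if_pos h, neg_mul]
        · rw [if_neg h, if_neg h]
    have heta : cs.eta (s i * w) t
        = (if w * t * w⁻¹ = s i then -(cs.eta w t) else cs.eta w t) := by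
      have h := key 1
      rw [eta, h, mul_one]
    rw [key e, heta]

lemma eta_mul (u v t : W) : cs.eta (u * v) t = cs.eta u (v * t * v⁻¹) * cs.eta v t := by
  have h1 : cs.sgnPerm (u * v) (t, 1) = cs.sgnPerm u (cs.sgnPerm v (t, 1)) := by
    rw [map_mul, Equiv.Perm.mul_apply]
  have h2 := cs.sgnPerm_apply v t 1
  rw [mul_one] at h2
  have h3 := cs.sgnPerm_apply u (v * t * v⁻¹) (cs.eta v t)
  rw [eta, h1, h2, h3]

lemma eta_simple (i : B) (t : W) :
    cs.eta (s i) t = if t = s i then -1 else 1 := by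
  rw [eta, sgnPerm_simple, nu_apply]

lemma eta_one (t : W) : cs.eta 1 t = 1 := by
  rw [eta]; simp

lemma eta_reflection {t : W} (ht : cs.IsReflection t) : cs.eta t t = -1 := by
  obtain ⟨q, j, h⟩ := ht
  have hconj : q⁻¹ * t * q = s j := by rw [h]; group
  have h1 : cs.eta q (s j) * cs.eta q⁻¹ t = 1 := by
    have hh := cs.eta_mul q q⁻¹ t
    rw [mul_inv_cancel, cs.eta_one, inv_inv, hconj] at hh
    exact hh.symm
  have h2 : cs.eta (s j * q⁻¹) t = - cs.eta q⁻¹ t := by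
    have hh := cs.eta_mul (s j) q⁻¹ t
    rw [inv_inv, hconj, cs.eta_simple] at hh
    rw [hh, if_pos rfl, neg_one_mul]
  have h3 : (s j * q⁻¹) * t * (s j * q⁻¹)⁻¹ = s j := by
    rw [h]; group
  have h4 : q * (s j * q⁻¹) = t := by
    rw [h, mul_assoc]
  calc cs.eta t t = cs.eta (q * (s j * q⁻¹)) t := by rw [h4]
    _ = cs.eta q ((s j * q⁻¹) * t * (s j * q⁻¹)⁻¹) * cs.eta (s j * q⁻¹) t := cs.eta_mul _ _ _
    _ = cs.eta q (s j) * (- cs.eta q⁻¹ t) := by rw [h3, h2]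
    _ = -(cs.eta q (s j) * cs.eta q⁻¹ t) := by rw [mul_neg]
    _ = -1 := by rw [h1]

lemma mem_rightInvSeq_of_eta (ω : List B) (t : W) (h : cs.eta (π ω) t = -1) :
    t ∈ cs.rightInvSeq ω := by
  induction ω with
  | nil =>
    rw [wordProd_nil, cs.eta_one] at h
    exact absurd h (by decide)
  | cons i ω ih =>
    rw [wordProd_cons, cs.eta_mul (s i) (π ω) t] at h
    have hcons : cs.rightInvSeq (i :: ω) = ((π ω)⁻¹ * s i * π ω) :: cs.rightInvSeq ω := rfl
    rw [hcons, List.mem_cons]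
    rcases Int.units_eq_one_or (cs.eta (π ω) t) with h1 | h1
    · left
      rw [h1, mul_one, cs.eta_simple] at h
      by_cases hc : π ω * t * (π ω)⁻¹ = s i
      · have : t = (π ω)⁻¹ * s i * π ω := by rw [← hc]; group
        exact this
      · rw [if_neg hc] at h
        exact absurd h (by decide)
    · right
      exact ih h1

lemma eta_eq_neg_one {w t : W} (ht : cs.IsReflection t) (hlt : ℓ (w * t) < ℓ w) :
    cs.eta w t = -1 := by
  rcases Int.units_eq_one_or (cs.eta w t) with h1 | h1
  · exfalso
    have hm := cs.eta_mul w t t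
    rw [mul_inv_cancel_right, h1, cs.eta_reflection ht, one_mul] at hm
    obtain ⟨ρ, hρred, hρ⟩ := cs.exists_reduced_word' (w * t)
    rw [hρ] at hm
    have h3 := cs.mem_rightInvSeq_of_eta ρ t hm
    have h4 := (cs.isRightInversion_of_mem_rightInvSeq hρred h3).2
    rw [← hρ, mul_assoc, ht.mul_self, mul_one] at h4
    omega
  · exact h1

lemma mem_leftInvSeq_of_lt {ω : List B} {t : W} (ht : cs.IsReflection t)
    (hlt : ℓ (t * π ω) < ℓ (π ω)) : t ∈ cs.leftInvSeq ω := by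
  have h1 : ℓ ((π ω)⁻¹ * t) < ℓ ((π ω)⁻¹) := by
    have : ((π ω)⁻¹ * t)⁻¹ = t * π ω := by rw [mul_inv_rev, inv_inv, ht.inv]
    rw [← cs.length_inv ((π ω)⁻¹ * t), this, cs.length_inv]
    exact hlt
  have h2 : cs.eta ((π ω)⁻¹) t = -1 := cs.eta_eq_neg_one ht h1
  rw [← cs.wordProd_reverse] at h2
  have h3 := cs.mem_rightInvSeq_of_eta _ t h2
  rw [cs.rightInvSeq_reverse, List.mem_reverse] at h3
  exact h3

/-- Strong exchange property (left version), for arbitrary words. -/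
lemma strong_exchange_left {ω : List B} {t : W} (ht : cs.IsReflection t)
    (hlt : ℓ (t * π ω) < ℓ (π ω)) :
    ∃ j, t * π ω = π (ω.eraseIdx j) := by
  have hmem := cs.mem_leftInvSeq_of_lt ht hlt
  obtain ⟨j, hj, hjt⟩ := List.mem_iff_getElem.mp hmem
  refine ⟨j, ?_⟩
  have := cs.getD_leftInvSeq_mul_wordProd ω j
  rw [List.getD_eq_getElem _ 1 hj, hjt] at this
  exact this

end CoxeterSystem

end

namespace BruhatAux

variable (cs : CoxeterSystem M W)

local prefix:100 "s" => cs.simple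
local prefix:100 "π" => cs.wordProd
local prefix:100 "ℓ" => cs.length

lemma length_le_of_bruhatLE {v w : W} (h : bruhatLE cs v w) : ℓ v ≤ ℓ w := by
  induction h with
  | refl => exact le_rfl
  | tail _ hedge ih =>
    obtain ⟨t, _, _, hlen⟩ := hedge
    omega

lemma subword_of_bruhatLE {v w : W} (h : bruhatLE cs v w) :
    ∀ ω : List B, π ω = w → ∃ χ, χ.Sublist ω ∧ π χ = v := by
  induction h with
  | refl => exact fun ω hω => ⟨ω, List.Sublist.refl ω, hω⟩
  | @tail u w' hvu hedge ih =>
    intro ω hω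
    obtain ⟨t, ht, hw', hlen⟩ := hedge
    have hu : t * π ω = u := by
      rw [hω, hw', ← mul_assoc, ht.mul_self, one_mul]
    have hlt : ℓ (t * π ω) < ℓ (π ω) := by
      rw [hu, hω]
      exact hlen
    obtain ⟨j, hj⟩ := cs.strong_exchange_left ht hlt
    have : π (ω.eraseIdx j) = u := by rw [← hj, hu]
    obtain ⟨χ, hsub, hprod⟩ := ih (ω.eraseIdx j) this
    exact ⟨χ, hsub.trans (List.eraseIdx_sublist ω j), hprod⟩

lemma exists_reduced_sublist_aux (n : ℕ) :
    ∀ ω : List B, ω.length ≤ n → ∃ χ, χ.Sublist ω ∧ cs.IsReduced χ ∧ π χ = π ω := by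
  induction n with
  | zero =>
    intro ω hω
    have : ω = [] := List.eq_nil_of_length_eq_zero (Nat.le_zero.mp hω)
    subst this
    exact ⟨[], List.Sublist.refl _, by simp [CoxeterSystem.IsReduced], rfl⟩
  | succ n ih =>
    intro ω hω
    by_cases hred : cs.IsReduced ω
    · exact ⟨ω, List.Sublist.refl _, hred, rfl⟩
    cases ω with
    | nil => exact absurd (by simp [CoxeterSystem.IsReduced]) hred
    | cons i ω₀ =>
      by_cases hdesc : ℓ (s i * π ω₀) < ℓ (π ω₀)
      · obtain ⟨j, hj⟩ := cs.strong_exchange_left (cs.isReflection_simple i) hdesc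
        have hlen : (ω₀.eraseIdx j).length ≤ n := by
          have h1 := (List.eraseIdx_sublist ω₀ j).length_le
          simp only [List.length_cons] at hω
          omega
        obtain ⟨χ, hsub, hr, hp⟩ := ih (ω₀.eraseIdx j) hlen
        refine ⟨χ, hsub.trans ((List.eraseIdx_sublist ω₀ j).trans
          (List.sublist_cons_self i ω₀)), hr, ?_⟩
        rw [hp, ← hj, wordProd_cons]
      · have hne := cs.length_simple_mul_ne (π ω₀) i
        have hsucc : ℓ (s i * π ω₀) = ℓ (π ω₀) + 1 := by
          rcases cs.length_simple_mul (π ω₀) i with h | h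
          · exact h
          · omega
        have hred₀ : ¬ cs.IsReduced ω₀ := by
          intro hr
          apply hred
          show ℓ (π (i :: ω₀)) = (i :: ω₀).length
          rw [wordProd_cons, hsucc, hr, List.length_cons]
        obtain ⟨χ₀, hsub, hr, hp⟩ := ih ω₀ (by simp only [List.length_cons] at hω; omega)
        refine ⟨i :: χ₀, List.Sublist.cons₂ i hsub, ?_, ?_⟩
        · show ℓ (π (i :: χ₀)) = (i :: χ₀).length
          rw [wordProd_cons, hp, hsucc, List.length_cons, ← hp, hr]
        · rw [wordProd_cons, wordProd_cons, hp]

lemma exists_reduced_sublist (ω : List B) :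
    ∃ χ, χ.Sublist ω ∧ cs.IsReduced χ ∧ π χ = π ω :=
  exists_reduced_sublist_aux cs ω.length ω le_rfl

lemma triple (n : ℕ) :
    (∀ w : W, ℓ w ≤ n → ∀ i : B, cs.IsLeftDescent w i → ∀ v : W, bruhatLE cs v w →
      bruhatLE cs (s i * v) w) ∧
    (∀ w : W, ℓ w ≤ n → ∀ i : B, ¬ cs.IsLeftDescent w i → ∀ v : W, bruhatLE cs v w →
      ¬ cs.IsLeftDescent v i → bruhatLE cs (s i * v) (s i * w)) ∧
    (∀ ω : List B, cs.IsReduced ω → ω.length ≤ n → ∀ χ : List B, χ.Sublist ω →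
      bruhatLE cs (π χ) (π ω)) := by
  induction n with
  | zero =>
    refine ⟨?_, ?_, ?_⟩
    · intro w hw i hdesc v hv
      exfalso
      have hw1 : w = 1 := cs.length_eq_zero_iff.mp (Nat.le_zero.mp hw)
      subst hw1
      exact cs.not_isLeftDescent_one i hdesc
    · intro w hw i hnd v hv hndv
      have hw1 : w = 1 := cs.length_eq_zero_iff.mp (Nat.le_zero.mp hw)
      subst hw1
      have hv1 : v = 1 := by
        have := length_le_of_bruhatLE cs hv
        rw [cs.length_one] at this
        exact cs.length_eq_zero_iff.mp (Nat.le_zero.mp this)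
      subst hv1
      exact Relation.ReflTransGen.refl
    · intro ω hred hlen χ hχ
      have hω : ω = [] := List.eq_nil_of_length_eq_zero (Nat.le_zero.mp hlen)
      subst hω
      have hχ' : χ = [] := List.sublist_nil.mp hχ
      subst hχ'
      exact Relation.ReflTransGen.refl
  | succ n ih =>
    obtain ⟨Zih, Uih, Sih⟩ := ih
    have hU : ∀ w : W, ℓ w ≤ n + 1 → ∀ i : B, ¬ cs.IsLeftDescent w i → ∀ v : W,
        bruhatLE cs v w → ¬ cs.IsLeftDescent v i →
        bruhatLE cs (s i * v) (s i * w) := by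
      intro w hw i hnd v hv hndv
      rcases Relation.ReflTransGen.cases_tail hv with heq | ⟨u, hvu, hedge⟩
      · subst heq
        exact Relation.ReflTransGen.refl
      · obtain ⟨t, ht, hwt, hlen⟩ := hedge
        have hun : ℓ u ≤ n := by omega
        have hsw : ℓ (s i * w) = ℓ w + 1 := cs.not_isLeftDescent_iff.mp hnd
        by_cases hdu : cs.IsLeftDescent u i
        · have h1 := Zih u hun i hdu v hvu
          exact (h1.tail ⟨t, ht, hwt, hlen⟩).tail
            ⟨s i, cs.isReflection_simple i, rfl, by omega⟩
        · have h1 := Uih u hun i hdu v hvu hndv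
          have hsu : ℓ (s i * u) = ℓ u + 1 := cs.not_isLeftDescent_iff.mp hdu
          refine h1.tail ⟨s i * t * s i, ?_, ?_, ?_⟩
          · have := ht.conj (s i)
            rwa [cs.inv_simple] at this
          · rw [hwt]
            simp only [mul_assoc, cs.simple_mul_simple_cancel_left]
          · omega
    have hZ : ∀ w : W, ℓ w ≤ n + 1 → ∀ i : B, cs.IsLeftDescent w i → ∀ v : W,
        bruhatLE cs v w → bruhatLE cs (s i * v) w := by
      intro w hw i hdesc v hv
      rcases Nat.lt_trichotomy (ℓ (s i * v)) (ℓ v) with hlt | heq | hgt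
      · exact Relation.ReflTransGen.head
          ⟨s i, cs.isReflection_simple i, (cs.simple_mul_simple_cancel_left (w := v) i).symm, hlt⟩ hv
      · exact absurd heq (cs.length_simple_mul_ne v i)
      · have hdesc' : ℓ (s i * w) < ℓ w := hdesc
        have hlw : ℓ (s i * w) + 1 = ℓ w := by
          rcases cs.length_simple_mul w i with h | h
          · omega
          · exact h
        obtain ⟨ω₀, hlen₀, hprod₀⟩ := cs.exists_reduced_word (s i * w)
        have hwprod : π (i :: ω₀) = w := by
          rw [wordProd_cons, ← hprod₀, cs.simple_mul_simple_cancel_left]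
        obtain ⟨χ, hχsub, hχprod⟩ := subword_of_bruhatLE cs hv (i :: ω₀) hwprod
        obtain ⟨χ', hs', hr', hp'⟩ := exists_reduced_sublist cs χ
        rw [hχprod] at hp'
        have hsub' := hs'.trans hχsub
        rcases List.sublist_cons_iff.mp hsub' with hcase | ⟨χ₀, heq', hχ₀⟩
        · have hred₀ : cs.IsReduced ω₀ := by
            show ℓ (π ω₀) = ω₀.length
            exact hlen₀
          have hn₀ : ω₀.length ≤ n := by
            have h : ℓ (π ω₀) = ω₀.length := hlen₀
            rw [← hprod₀] at h
            omega
          have h1 := Sih ω₀ hred₀ hn₀ χ' hcase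
          rw [hp', ← hprod₀] at h1
          have hnd1 : ¬ cs.IsLeftDescent (s i * w) i := by
            intro hcon
            have hcon' : ℓ (s i * (s i * w)) < ℓ (s i * w) := hcon
            rw [cs.simple_mul_simple_cancel_left] at hcon'
            omega
          have hnd2 : ¬ cs.IsLeftDescent v i := by
            intro hcon
            have hcon' : ℓ (s i * v) < ℓ v := hcon
            omega
          have hU' := hU (s i * w) (by omega) i hnd1 v h1 hnd2
          rwa [cs.simple_mul_simple_cancel_left] at hU'
        · exfalso
          subst heq'
          have hlv : ℓ v = χ₀.length + 1 := by
            rw [← hp']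
            have : ℓ (π (i :: χ₀)) = (i :: χ₀).length := hr'
            rw [this, List.length_cons]
          have hsiv : s i * v = π χ₀ := by
            rw [← hp', wordProd_cons, cs.simple_mul_simple_cancel_left]
          have hb := cs.length_wordProd_le χ₀
          rw [hsiv] at hgt
          omega
    refine ⟨hZ, hU, ?_⟩
    intro ω hred hlen χ hχ
    obtain ⟨χ', hs', hr', hp'⟩ := exists_reduced_sublist cs χ
    rw [← hp']
    have hsub' := hs'.trans hχ
    cases ω with
    | nil =>
      have h0 : χ' = [] := List.sublist_nil.mp hsub'
      subst h0
      exact Relation.ReflTransGen.refl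
    | cons i ω₀ =>
      have hredlen : ℓ (π (i :: ω₀)) = ω₀.length + 1 := by
        have : ℓ (π (i :: ω₀)) = (i :: ω₀).length := hred
        rw [this, List.length_cons]
      have hred₀ : cs.IsReduced ω₀ := by
        have h1 := cs.length_wordProd_le ω₀
        have h2 : ℓ (π (i :: ω₀)) ≤ ℓ (s i) + ℓ (π ω₀) := by
          rw [wordProd_cons] at *
          exact cs.length_mul_le _ _
        rw [cs.length_simple] at h2
        show ℓ (π ω₀) = ω₀.length
        omega
      have hlt₀ : ℓ (π ω₀) < ℓ (π (i :: ω₀)) := by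
        have : ℓ (π ω₀) = ω₀.length := hred₀
        omega
      have hlen₀ : ω₀.length ≤ n := by
        simp only [List.length_cons] at hlen
        omega
      have hedge₀ : bruhatEdge cs (π ω₀) (π (i :: ω₀)) :=
        ⟨s i, cs.isReflection_simple i, cs.wordProd_cons i ω₀, hlt₀⟩
      rcases List.sublist_cons_iff.mp hsub' with hcase | ⟨χ₀, heq', hχ₀⟩
      · exact (Sih ω₀ hred₀ hlen₀ χ' hcase).tail hedge₀
      · subst heq'
        have h1 := (Sih ω₀ hred₀ hlen₀ χ₀ hχ₀).tail hedge₀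
        have hdesc : cs.IsLeftDescent (π (i :: ω₀)) i := by
          show ℓ (s i * π (i :: ω₀)) < ℓ (π (i :: ω₀))
          rw [wordProd_cons, cs.simple_mul_simple_cancel_left]
          exact hlt₀
        have h3 := hZ (π (i :: ω₀)) (by omega) i hdesc (π χ₀) h1
        rw [wordProd_cons]
        exact h3

/-- Property Z / one direction of the lifting property. -/
lemma bruhatLE_simple_mul {w : W} {i : B} (hdesc : cs.IsLeftDescent w i) {v : W}
    (hv : bruhatLE cs v w) : bruhatLE cs (s i * v) w :=
  (triple cs (ℓ w)).1 w le_rfl i hdesc v hv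

lemma bruhatLE_simple_mul_iff {w : W} {i : B} (hdesc : cs.IsLeftDescent w i) (v : W) :
    bruhatLE cs v w ↔ bruhatLE cs (s i * v) w := by
  constructor
  · exact fun hv => bruhatLE_simple_mul cs hdesc hv
  · intro hv
    have := bruhatLE_simple_mul cs hdesc hv
    rwa [cs.simple_mul_simple_cancel_left] at this

lemma edge_or_edge_iff (v y : W) :
    (bruhatEdge cs v y ∨ bruhatEdge cs y v) ↔ ∃ t, cs.IsReflection t ∧ y = t * v := by
  constructor
  · rintro (⟨t, ht, hy, _⟩ | ⟨t, ht, hv, _⟩)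
    · exact ⟨t, ht, hy⟩
    · exact ⟨t, ht, by rw [hv, ← mul_assoc, ht.mul_self, one_mul]⟩
  · rintro ⟨t, ht, rfl⟩
    have hne := ht.length_mul_right_ne v
    rcases Nat.lt_or_ge (ℓ v) (ℓ (t * v)) with h | h
    · exact Or.inl ⟨t, ht, rfl, h⟩
    · exact Or.inr ⟨t, ht, by rw [← mul_assoc, ht.mul_self, one_mul], by omega⟩

lemma edge_or_edge_mul_simple (i : B) (u y : W) :
    (bruhatEdge cs u y ∨ bruhatEdge cs y u) ↔
    (bruhatEdge cs (s i * u) (s i * y) ∨ bruhatEdge cs (s i * y) (s i * u)) := by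
  rw [edge_or_edge_iff, edge_or_edge_iff]
  constructor
  · rintro ⟨t, ht, rfl⟩
    refine ⟨s i * t * s i, ?_, ?_⟩
    · have := ht.conj (s i)
      rwa [cs.inv_simple] at this
    · simp only [mul_assoc, cs.simple_mul_simple_cancel_left]
  · rintro ⟨t, ht, hy⟩
    refine ⟨s i * t * s i, ?_, ?_⟩
    · have := ht.conj (s i)
      rwa [cs.inv_simple] at this
    · have h2 : s i * (s i * y) = s i * (t * (s i * u)) := by rw [hy]
      rw [cs.simple_mul_simple_cancel_left] at h2
      rw [h2]
      simp only [mul_assoc]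

lemma edge_or_edge_cancel (i : B) (u z : W) :
    (bruhatEdge cs (s i * u) z ∨ bruhatEdge cs z (s i * u)) ↔
    (bruhatEdge cs u (s i * z) ∨ bruhatEdge cs (s i * z) u) := by
  have h := edge_or_edge_mul_simple cs i (s i * u) z
  rw [cs.simple_mul_simple_cancel_left] at h
  exact h


end BruhatAux

open scoped Classical in
/-- Degree of `v` in the Bruhat graph on the lower interval `[e, w]` (0 outside). -/
noncomputable def degLower (cs : CoxeterSystem M W) (w v : W) : ℕ :=
  if bruhatLE cs v w then
    Set.ncard {y : W | bruhatLE cs y w ∧ (bruhatEdge cs v y ∨ bruhatEdge cs y v)}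
  else 0

/-- Invariance of degree on lower Bruhat intervals under left descents. -/
theorem degLower_left_descent_invariant [Finite W]
    (cs : CoxeterSystem M W) (w : W) (i : B) (hi : cs.IsLeftDescent w i) :
    ∀ v : W, degLower cs w v = degLower cs w (cs.simple i * v) := by
  classical
  intro v
  have hiff : ∀ u : W, bruhatLE cs u w ↔ bruhatLE cs (cs.simple i * u) w :=
    BruhatAux.bruhatLE_simple_mul_iff cs hi
  have himg : {y : W | bruhatLE cs y w ∧
        (bruhatEdge cs (cs.simple i * v) y ∨ bruhatEdge cs y (cs.simple i * v))}
      = (fun y => cs.simple i * y) ''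
        {y : W | bruhatLE cs y w ∧ (bruhatEdge cs v y ∨ bruhatEdge cs y v)} := by
    ext z
    simp only [Set.mem_image, Set.mem_setOf_eq]
    constructor
    · rintro ⟨hz, hE⟩
      refine ⟨cs.simple i * z, ⟨(hiff z).mp hz, ?_⟩, cs.simple_mul_simple_cancel_left i⟩
      exact (BruhatAux.edge_or_edge_cancel cs i v z).mp hE
    · rintro ⟨y, ⟨hy, hE⟩, rfl⟩
      exact ⟨(hiff y).mp hy, (BruhatAux.edge_or_edge_mul_simple cs i v y).mp hE⟩
  by_cases hv : bruhatLE cs v w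
  · have hrv : bruhatLE cs (cs.simple i * v) w := (hiff v).mp hv
    rw [degLower, degLower, if_pos hv, if_pos hrv, himg,
      Set.ncard_image_of_injective _ (mul_right_injective (cs.simple i))]
  · have hrv : ¬ bruhatLE cs (cs.simple i * v) w := fun h => hv ((hiff v).mpr h)
    rw [degLower, degLower, if_neg hv, if_neg hrv]
end

section
/- Let W be a finite Coxeter group and [u, w] a noncritical Bruhat interval, i.e., D_L(w) ⊄ D_L(u) or D_R(w) ⊄ D_R(u). Then Σ_{v ∈ [u,w]} (−1)^{out_w(v)} = 0, where out_w(v) is the number of v' ∈ [u,w] with v → v' in the Bruhat graph on [e,w]. -/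
open CoxeterSystem

variable {B W : Type*} [Group W] {M : CoxeterMatrix B}

namespace NC
open CoxeterSystem List

open scoped Classical

variable {B W : Type*} [Group W] {M : CoxeterMatrix B} (cs : CoxeterSystem M W)

local prefix:100 "s" => cs.simple
local prefix:100 "π" => cs.wordProd
local prefix:100 "ℓ" => cs.length
local prefix:100 "ris" => cs.rightInvSeq

/-- The generator permutations of the sign representation on `W × ℤˣ`. -/
noncomputable def etaFun (i : B) : W × ℤˣ → W × ℤˣ :=
  fun p => (s i * p.1 * s i, if p.1 = s i then -p.2 else p.2)

lemma etaFun_involutive (i : B) : Function.Involutive (etaFun cs i) := by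
  rintro ⟨t, ε⟩
  simp only [etaFun]
  have h1 : s i * (s i * t * s i) * s i = t := by
    rw [← mul_assoc, ← mul_assoc, cs.simple_mul_simple_self, one_mul, mul_assoc,
      cs.simple_mul_simple_self, mul_one]
  have h2 : (s i * t * s i = s i) ↔ (t = s i) := by
    constructor
    · intro h
      have := congrArg (fun x => s i * x * s i) h
      simpa [h1, ← mul_assoc, cs.simple_mul_simple_self] using this
    · rintro rfl; rw [cs.simple_mul_simple_self, one_mul]
  rcases eq_or_ne t (s i) with h | h
  · simp [h, h2, h1]
  · simp [h, h2.not.mpr h, h1]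

noncomputable def eta (i : B) : Equiv.Perm (W × ℤˣ) :=
  Function.Involutive.toPerm _ (etaFun_involutive cs i)

lemma eta_apply (i : B) (p : W × ℤˣ) : eta cs i p = etaFun cs i p := rfl

noncomputable def phi (ω : List B) : Equiv.Perm (W × ℤˣ) := (ω.map (eta cs)).prod

@[simp] lemma phi_nil : phi cs [] = 1 := rfl

lemma phi_cons (i : B) (ω : List B) : phi cs (i :: ω) = eta cs i * phi cs ω := by
  simp [phi]

lemma phi_apply (ω : List B) (t : W) (ε : ℤˣ) :
    phi cs ω (t, ε) = (π ω * t * (π ω)⁻¹, (-1 : ℤˣ) ^ ((ris ω).count t) * ε) := by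
  induction ω with
  | nil => simp
  | cons i ω ih =>
    rw [phi_cons, Equiv.Perm.mul_apply, ih, eta_apply]
    have hris : ris (i :: ω) = (π ω)⁻¹ * s i * π ω :: ris ω := rfl
    have hpi : π (i :: ω) = s i * π ω := cs.wordProd_cons i ω
    have hpinv : (π (i :: ω))⁻¹ = (π ω)⁻¹ * s i := by
      rw [hpi, mul_inv_rev, cs.inv_simple]
    simp only [etaFun]
    have hcond : (π ω * t * (π ω)⁻¹ = s i) ↔ ((π ω)⁻¹ * s i * π ω = t) := by
      constructor
      · intro h; rw [← h]; group
      · intro h; rw [← h]; group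
    have hfst : s i * (π ω * t * (π ω)⁻¹) * s i = π (i :: ω) * t * (π (i :: ω))⁻¹ := by
      rw [hpi, mul_inv_rev, cs.inv_simple]; group
    rcases eq_or_ne (π ω * t * (π ω)⁻¹) (s i) with h | h
    · have hm : (π ω)⁻¹ * s i * π ω = t := hcond.mp h
      rw [if_pos h]
      refine Prod.ext hfst ?_
      simp only [hris, List.count_cons, hm]
      have : (t == t) = true := by simp
      rw [this]
      simp [pow_succ, mul_comm, mul_assoc]
    · have hm : ¬((π ω)⁻¹ * s i * π ω = t) := fun hh => h (hcond.mpr hh)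
      rw [if_neg h]
      refine Prod.ext hfst ?_
      simp only [hris, List.count_cons]
      have : ((π ω)⁻¹ * s i * π ω == t) = false := by simpa using hm
      rw [this]
      simp

lemma phi_pow (i i' : B) (m : ℕ) :
    (eta cs i * eta cs i') ^ m = phi cs (alternatingWord i i' (2 * m)) := by
  induction m with
  | zero => simp [alternatingWord]
  | succ m ih =>
    have h1 : alternatingWord i i' (2 * (m + 1)) = i :: i' :: alternatingWord i i' (2 * m) := by
      have e1 : 2 * (m + 1) = (2 * m + 1) + 1 := by ring
      rw [e1, alternatingWord_succ' i i' (2 * m + 1), alternatingWord_succ' i i' (2 * m)]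
      simp [Nat.even_add_one, Nat.even_mul]
    rw [h1, phi_cons, phi_cons, ← ih, pow_succ']
    rw [mul_assoc]

lemma conj_z (i i' : B) (a : ℕ) :
    s i' * (s i * s i') ^ a = ((s i * s i') ^ a)⁻¹ * s i' := by
  induction a with
  | zero => simp
  | succ a ih =>
    have h0 : s i' * (s i * s i') = (s i * s i')⁻¹ * s i' := by
      rw [mul_inv_rev, cs.inv_simple, cs.inv_simple]; group
    rw [pow_succ, ← mul_assoc, ih, mul_assoc, h0, ← mul_assoc, ← mul_inv_rev, ← pow_succ', pow_succ]

/-- Closed form for consecutive quotients of alternating word products. -/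
lemma cf (i i' : B) (k : ℕ) :
    (π (alternatingWord i i' k))⁻¹ * π (alternatingWord i i' (k + 1))
      = ((s i * s i') ^ k)⁻¹ * s i' := by
  rcases Nat.even_or_odd k with hk | hk
  · obtain ⟨c, rfl⟩ := hk
    have h1 : π (alternatingWord i i' (c + c)) = (s i * s i') ^ c := by
      rw [cs.prod_alternatingWord_eq_mul_pow]
      have hdiv : (c + c) / 2 = c := by omega
      rw [if_pos ⟨c, rfl⟩, one_mul, hdiv]
    have h2 : π (alternatingWord i i' (c + c + 1)) = s i' * (s i * s i') ^ c := by
      rw [cs.prod_alternatingWord_eq_mul_pow]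
      have hdiv : (c + c + 1) / 2 = c := by omega
      rw [if_neg (fun ⟨d, hd⟩ => by omega), hdiv]
    rw [h1, h2, conj_z, ← mul_assoc, ← mul_inv_rev, ← pow_add]
  · obtain ⟨c, rfl⟩ := hk
    have h1 : π (alternatingWord i i' (2 * c + 1)) = s i' * (s i * s i') ^ c := by
      rw [cs.prod_alternatingWord_eq_mul_pow]
      have hdiv : (2 * c + 1) / 2 = c := by omega
      rw [if_neg (fun ⟨d, hd⟩ => by omega), hdiv]
    have h2 : π (alternatingWord i i' (2 * c + 1 + 1)) = (s i * s i') ^ (c + 1) := by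
      rw [cs.prod_alternatingWord_eq_mul_pow]
      have hdiv : (2 * c + 1 + 1) / 2 = c + 1 := by omega
      rw [if_pos ⟨c + 1, by omega⟩, one_mul, hdiv]
    rw [h1, h2, mul_inv_rev, cs.inv_simple, mul_assoc, conj_z, ← mul_assoc, ← mul_inv_rev,
      ← pow_add]
    have : c + 1 + c = 2 * c + 1 := by omega
    rw [this]

lemma ris_alternatingWord (i i' : B) (p : ℕ) :
    ris (alternatingWord i i' p)
      = (List.range p).map (fun j => ((s i * s i') ^ (p - j - 1))⁻¹ * s i') := by
  induction p with
  | zero => simp [alternatingWord]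
  | succ p ih =>
    rw [alternatingWord_succ' i i' p]
    have hris : ris ((if Even p then i' else i) :: alternatingWord i i' p)
        = (π (alternatingWord i i' p))⁻¹ * s (if Even p then i' else i)
            * π (alternatingWord i i' p) :: ris (alternatingWord i i' p) := rfl
    rw [hris, ih, List.range_succ_eq_map, List.map_cons, List.map_map]
    congr 1
    · have hcons : π (alternatingWord i i' (p + 1))
          = s (if Even p then i' else i) * π (alternatingWord i i' p) := by
        rw [alternatingWord_succ' i i' p, cs.wordProd_cons]
      have := cf cs i i' p
      rw [hcons] at this
      have h2 : (π (alternatingWord i i' p))⁻¹ * s (if Even p then i' else i)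
          * π (alternatingWord i i' p)
          = (π (alternatingWord i i' p))⁻¹
            * (s (if Even p then i' else i) * π (alternatingWord i i' p)) := by group
      rw [h2, this]
      simp
    · apply List.map_congr_left
      intro a ha
      simp only [Function.comp_apply, Nat.succ_eq_add_one]
      have h3 : p + 1 - (a + 1) - 1 = p - a - 1 := by omega
      rw [h3]

lemma count_ris_even (i i' : B) (t : W) :
    Even ((ris (alternatingWord i i' (2 * M i i'))).count t) := by
  have hz : (s i * s i') ^ M i i' = 1 := cs.simple_mul_simple_pow i i'
  have h2m : 2 * M i i' = M i i' + M i i' := by omega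
  rw [ris_alternatingWord, h2m, List.range_add, List.map_append, List.map_map]
  have heq : (List.range (M i i')).map
        (fun j => ((s i * s i') ^ (M i i' + M i i' - j - 1))⁻¹ * s i')
      = (List.range (M i i')).map
        ((fun j => ((s i * s i') ^ (M i i' + M i i' - j - 1))⁻¹ * s i') ∘ (fun x => M i i' + x)) := by
    apply List.map_congr_left
    intro a ha
    have ha' : a < M i i' := List.mem_range.mp ha
    simp only [Function.comp_apply]
    have e1 : M i i' + M i i' - a - 1 = M i i' + (M i i' - a - 1) := by omega
    have e2 : M i i' + M i i' - (M i i' + a) - 1 = M i i' - a - 1 := by omega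
    rw [e1, e2, pow_add, hz, one_mul]
  rw [heq, List.count_append]
  exact ⟨_, rfl⟩

lemma eta_liftable : M.IsLiftable (eta cs) := by
  intro i i'
  rw [phi_pow]
  apply Equiv.ext
  rintro ⟨t, ε⟩
  rw [phi_apply]
  have hpi : π (alternatingWord i i' (2 * M i i')) = 1 := by
    rw [cs.prod_alternatingWord_eq_mul_pow]
    have hdiv : 2 * M i i' / 2 = M i i' := by omega
    rw [if_pos ⟨M i i', by omega⟩, one_mul, hdiv, cs.simple_mul_simple_pow]
  rw [hpi, Even.neg_one_pow (count_ris_even cs i i' t)]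
  simp

noncomputable def mu : W →* Equiv.Perm (W × ℤˣ) := cs.lift ⟨eta cs, eta_liftable cs⟩

lemma mu_simple (i : B) : mu cs (s i) = eta cs i := cs.lift_apply_simple (eta_liftable cs) i

lemma mu_wordProd (ω : List B) : mu cs (π ω) = phi cs ω := by
  induction ω with
  | nil => rw [cs.wordProd_nil, map_one]; rfl
  | cons i ω ih => rw [cs.wordProd_cons, map_mul, mu_simple, ih, phi_cons]

noncomputable def csgn (t w : W) : ℤˣ := (mu cs w (t, 1)).2

lemma mu_apply (w t : W) (ε : ℤˣ) : mu cs w (t, ε) = (w * t * w⁻¹, csgn cs t w * ε) := by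
  obtain ⟨ω, -, rfl⟩ := cs.exists_reduced_word' w
  simp only [csgn, mu_wordProd, phi_apply, mul_one]

lemma csgn_wordProd (t : W) (ω : List B) :
    csgn cs t (π ω) = (-1 : ℤˣ) ^ ((ris ω).count t) := by
  simp only [csgn, mu_wordProd, phi_apply, mul_one]

lemma mu_refl {t : W} (ht : cs.IsReflection t) (ε : ℤˣ) : mu cs t (t, ε) = (t, -ε) := by
  obtain ⟨u, i, rfl⟩ := ht
  have h1 : mu cs u⁻¹ (u * s i * u⁻¹, ε) = (s i, csgn cs (u * s i * u⁻¹) u⁻¹ * ε) := by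
    rw [mu_apply]
    have : u⁻¹ * (u * s i * u⁻¹) * u⁻¹⁻¹ = s i := by group
    rw [this]
  have h2 : ∀ x : ℤˣ, mu cs u (s i, x) = (u * s i * u⁻¹, csgn cs (s i) u * x) := by
    intro x; rw [mu_apply]
  have hh : mu cs u (mu cs u⁻¹ ((u * s i * u⁻¹ : W), ε)) = ((u * s i * u⁻¹ : W), ε) := by
    have huu : u * u⁻¹ = 1 := by group
    rw [← Equiv.Perm.mul_apply, ← map_mul, huu, map_one, Equiv.Perm.one_apply]
  rw [h1, h2] at hh
  have h3 : csgn cs (s i) u * (csgn cs (u * s i * u⁻¹) u⁻¹ * ε) = ε := (Prod.ext_iff.mp hh).2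
  calc mu cs (u * s i * u⁻¹) (u * s i * u⁻¹, ε)
      = mu cs u (mu cs (s i) (mu cs u⁻¹ (u * s i * u⁻¹, ε))) := by
        rw [map_mul, map_mul, Equiv.Perm.mul_apply, Equiv.Perm.mul_apply]
    _ = mu cs u (mu cs (s i) (s i, csgn cs (u * s i * u⁻¹) u⁻¹ * ε)) := by rw [h1]
    _ = mu cs u (s i, -(csgn cs (u * s i * u⁻¹) u⁻¹ * ε)) := by
        rw [mu_simple, eta_apply]
        simp only [etaFun, eq_self_iff_true, if_true]
        rw [cs.simple_mul_simple_self, one_mul]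
    _ = (u * s i * u⁻¹, csgn cs (s i) u * -(csgn cs (u * s i * u⁻¹) u⁻¹ * ε)) := h2 _
    _ = (u * s i * u⁻¹, -ε) := by rw [mul_neg, h3]

lemma csgn_neg_one_imp {t : W} (ht : cs.IsReflection t) (w : W)
    (h : csgn cs t w = -1) : cs.IsRightInversion w t := by
  obtain ⟨ω, hred, rfl⟩ := cs.exists_reduced_word' w
  rw [csgn_wordProd] at h
  have hodd : Odd ((ris ω).count t) := by
    rcases Nat.even_or_odd ((ris ω).count t) with he | ho
    · rw [Even.neg_one_pow he] at h
      exact absurd h (by decide)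
    · exact ho
  have hmem : t ∈ ris ω := by
    have : 0 < (ris ω).count t := Nat.pos_of_ne_zero (by
      intro h0; rw [h0] at hodd; exact (Nat.not_odd_iff_even.mpr Even.zero) hodd)
    exact List.count_pos_iff.mp this
  exact cs.isRightInversion_of_mem_rightInvSeq hred hmem

lemma isRightInversion_iff_csgn {t : W} (ht : cs.IsReflection t) (w : W) :
    cs.IsRightInversion w t ↔ csgn cs t w = -1 := by
  constructor
  · intro h
    by_contra hne
    have h1 : csgn cs t w = 1 := (Int.units_eq_one_or _).resolve_right hne
    have h2 : csgn cs t (w * t) = -1 := by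
      show (mu cs (w * t) (t, 1)).2 = -1
      rw [map_mul, Equiv.Perm.mul_apply, mu_refl cs ht, mu_apply, h1]
      simp
    have h3 := (csgn_neg_one_imp cs ht (w * t) h2).2
    rw [mul_assoc, ht.mul_self, mul_one] at h3
    exact absurd h.2 (by omega)
  · exact csgn_neg_one_imp cs ht w

lemma conj_simple_eq_iff (i : B) (t : W) : s i * t * s i = s i ↔ t = s i := by
  constructor
  · intro h
    have h2 : t = (s i)⁻¹ * (s i * t * s i) * (s i)⁻¹ := by group
    rw [h, cs.inv_simple] at h2
    rwa [cs.simple_mul_simple_self, one_mul] at h2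
  · rintro rfl; rw [cs.simple_mul_simple_self, one_mul]

lemma csgn_mul_simple_right (i : B) {t : W} (hne : t ≠ s i) (w : W) :
    csgn cs t (w * s i) = csgn cs (s i * t * s i) w := by
  show (mu cs (w * s i) (t, 1)).2 = _
  rw [map_mul, Equiv.Perm.mul_apply, mu_simple, eta_apply]
  simp only [etaFun, if_neg hne]
  rw [mu_apply, mul_one]

lemma csgn_mul_simple_left (i : B) {t w : W} (hne : w * t * w⁻¹ ≠ s i) :
    csgn cs t (s i * w) = csgn cs t w := by
  show (mu cs (s i * w) (t, 1)).2 = (mu cs w (t, 1)).2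
  rw [map_mul, Equiv.Perm.mul_apply, mu_apply cs w t 1, mu_simple, eta_apply]
  simp only [etaFun, if_neg hne, mul_one]

lemma isRightInversion_mul_simple_iff (i : B) {t : W} (ht : cs.IsReflection t)
    (hne : t ≠ s i) (w : W) :
    cs.IsRightInversion (w * s i) (s i * t * s i) ↔ cs.IsRightInversion w t := by
  have ht2 : cs.IsReflection (s i * t * s i) := by
    have := ht.conj (s i)
    rwa [cs.inv_simple] at this
  rw [isRightInversion_iff_csgn cs ht2, isRightInversion_iff_csgn cs ht]
  have hne2 : s i * t * s i ≠ s i := fun h => hne ((conj_simple_eq_iff cs i t).mp h)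
  rw [csgn_mul_simple_right cs i hne2]
  have : s i * (s i * t * s i) * s i = t := by
    rw [← mul_assoc, ← mul_assoc, cs.simple_mul_simple_self, one_mul, mul_assoc,
      cs.simple_mul_simple_self, mul_one]
  rw [this]

lemma isLeftInversion_simple_mul_iff (i : B) {t : W} (ht : cs.IsReflection t)
    (hne : t ≠ s i) (x : W) :
    cs.IsLeftInversion (s i * x) (s i * t * s i) ↔ cs.IsLeftInversion x t := by
  rw [← cs.isRightInversion_inv_iff, ← cs.isRightInversion_inv_iff]
  have h : (s i * x)⁻¹ = x⁻¹ * s i := by rw [mul_inv_rev, cs.inv_simple]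
  rw [h]
  exact isRightInversion_mul_simple_iff cs i ht hne x⁻¹

lemma isLeftInversion_mul_simple_iff (i : B) {t x : W} (ht : cs.IsReflection t)
    (hne : t * x ≠ x * s i) :
    cs.IsLeftInversion (x * s i) t ↔ cs.IsLeftInversion x t := by
  rw [← cs.isRightInversion_inv_iff, ← cs.isRightInversion_inv_iff]
  have h : (x * s i)⁻¹ = s i * x⁻¹ := by rw [mul_inv_rev, cs.inv_simple]
  rw [h, isRightInversion_iff_csgn cs ht, isRightInversion_iff_csgn cs ht]
  have hne2 : x⁻¹ * t * x⁻¹⁻¹ ≠ s i := by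
    intro hh
    apply hne
    rw [inv_inv] at hh
    have h9 : t * x = x * (x⁻¹ * t * x) := by group
    rw [hh] at h9
    exact h9
  rw [csgn_mul_simple_left cs i hne2]

lemma length_lt_iff_left (i : B) {t : W} (ht : cs.IsReflection t) (hne : t ≠ s i) (x : W) :
    ℓ x < ℓ (t * x) ↔ ℓ (s i * x) < ℓ (s i * (t * x)) := by
  have ht2 : cs.IsReflection (s i * t * s i) := by
    have := ht.conj (s i)
    rwa [cs.inv_simple] at this
  have hconj : (s i * t * s i) * (s i * x) = s i * (t * x) := by
    simp [mul_assoc, cs.simple_mul_simple_cancel_left]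
  have h1 : ℓ (t * x) ≠ ℓ x := ht.length_mul_right_ne x
  have h2 : ℓ (s i * (t * x)) ≠ ℓ (s i * x) := by
    have := ht2.length_mul_right_ne (s i * x)
    rwa [hconj] at this
  have key := isLeftInversion_simple_mul_iff cs i ht hne x
  have key' : (ℓ (t * x) < ℓ x) ↔ (ℓ (s i * (t * x)) < ℓ (s i * x)) := by
    constructor
    · intro h
      have := key.mpr ⟨ht, h⟩
      have h5 := this.2
      rwa [hconj] at h5
    · intro h
      exact (key.mp ⟨ht2, by rwa [hconj]⟩).2
  omega

lemma length_lt_iff_right (i : B) {t : W} (ht : cs.IsReflection t) (x : W)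
    (hne : t * x ≠ x * s i) :
    ℓ x < ℓ (t * x) ↔ ℓ (x * s i) < ℓ (t * x * s i) := by
  have h1 : ℓ (t * x) ≠ ℓ x := ht.length_mul_right_ne x
  have h2 : ℓ (t * x * s i) ≠ ℓ (x * s i) := by
    have := ht.length_mul_right_ne (x * s i)
    rwa [← mul_assoc] at this
  have key := isLeftInversion_mul_simple_iff cs i ht hne
  have key' : (ℓ (t * x) < ℓ x) ↔ (ℓ (t * x * s i) < ℓ (x * s i)) := by
    constructor
    · intro h
      have := key.mpr ⟨ht, h⟩
      have h5 := this.2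
      rwa [← mul_assoc] at h5
    · intro h
      exact (key.mp ⟨ht, by rwa [mul_assoc] at h⟩).2
  omega


section Bruhat

lemma edge_le {x y : W} (h : bruhatEdge cs x y) : bruhatLE cs x y :=
  Relation.ReflTransGen.single h

lemma edge_length_lt {x y : W} (h : bruhatEdge cs x y) : ℓ x < ℓ y := by
  obtain ⟨t, -, -, hl⟩ := h; exact hl

lemma edge_simple_left {x : W} (i : B) (h : ℓ x < ℓ (s i * x)) :
    bruhatEdge cs x (s i * x) :=
  ⟨s i, cs.isReflection_simple i, rfl, h⟩

lemma edge_simple_left' {x : W} (i : B) (h : ℓ (s i * x) < ℓ x) :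
    bruhatEdge cs (s i * x) x :=
  ⟨s i, cs.isReflection_simple i, (cs.simple_mul_simple_cancel_left i).symm, h⟩

lemma edge_simple_right {x : W} (i : B) (h : ℓ x < ℓ (x * s i)) :
    bruhatEdge cs x (x * s i) := by
  refine ⟨x * s i * x⁻¹, (cs.isReflection_simple i).conj x, by group, h⟩

lemma edge_simple_right' {x : W} (i : B) (h : ℓ (x * s i) < ℓ x) :
    bruhatEdge cs (x * s i) x := by
  refine ⟨x * s i * x⁻¹, (cs.isReflection_simple i).conj x, ?_, h⟩
  have h9 : (x * s i * x⁻¹) * (x * s i) = x * (s i * s i) := by group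
  rw [h9, cs.simple_mul_simple_self, mul_one]

lemma conj_refl_simple (i : B) {t : W} (ht : cs.IsReflection t) :
    cs.IsReflection (s i * t * s i) := by
  have := ht.conj (s i)
  rwa [cs.inv_simple] at this

lemma Eleft (i : B) {x y : W} (h : bruhatLE cs x y) :
    bruhatLE cs (s i * x) (s i * y) ∨
      (bruhatLE cs (s i * x) y ∧ bruhatLE cs x (s i * y)) := by
  induction h using Relation.ReflTransGen.head_induction_on with
  | refl => exact Or.inl Relation.ReflTransGen.refl
  | @head a c h' hcy ih =>
    obtain ⟨t, ht, rfl, hlen⟩ := h'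
    by_cases hts : t = s i
    · subst hts
      rcases ih with ih1 | ⟨ih2, ih3⟩
      · rw [cs.simple_mul_simple_cancel_left] at ih1
        exact Or.inr ⟨hcy, ih1⟩
      · exact Or.inl ih3
    · have hlen2 : ℓ (s i * a) < ℓ (s i * (t * a)) :=
        (length_lt_iff_left cs i ht hts a).mp hlen
      have hedge2 : bruhatEdge cs (s i * a) (s i * (t * a)) := by
        refine ⟨s i * t * s i, conj_refl_simple cs i ht, ?_, hlen2⟩
        simp [mul_assoc, cs.simple_mul_simple_cancel_left]
      rcases ih with ih1 | ⟨ih2, ih3⟩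
      · exact Or.inl (Relation.ReflTransGen.head hedge2 ih1)
      · exact Or.inr ⟨Relation.ReflTransGen.head hedge2 ih2,
          Relation.ReflTransGen.head ⟨t, ht, rfl, hlen⟩ ih3⟩

lemma Eright (i : B) {x y : W} (h : bruhatLE cs x y) :
    bruhatLE cs (x * s i) (y * s i) ∨
      (bruhatLE cs (x * s i) y ∧ bruhatLE cs x (y * s i)) := by
  induction h using Relation.ReflTransGen.head_induction_on with
  | refl => exact Or.inl Relation.ReflTransGen.refl
  | @head a c h' hcy ih =>
    obtain ⟨t, ht, rfl, hlen⟩ := h'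
    by_cases hts : t * a = a * s i
    · rw [hts] at hcy ih
      rw [cs.simple_mul_simple_cancel_right] at ih
      rcases ih with ih1 | ⟨ih2, ih3⟩
      · exact Or.inr ⟨hcy, ih1⟩
      · exact Or.inl ih3
    · have hlen2 : ℓ (a * s i) < ℓ (t * a * s i) :=
        (length_lt_iff_right cs i ht a hts).mp hlen
      have hedge2 : bruhatEdge cs (a * s i) (t * a * s i) :=
        ⟨t, ht, mul_assoc t a (s i), hlen2⟩
      rcases ih with ih1 | ⟨ih2, ih3⟩
      · exact Or.inl (Relation.ReflTransGen.head hedge2 ih1)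
      · exact Or.inr ⟨Relation.ReflTransGen.head hedge2 ih2,
          Relation.ReflTransGen.head ⟨t, ht, rfl, hlen⟩ ih3⟩

lemma interval_closed_left (i : B) {u w : W} (hu : ℓ u < ℓ (s i * u))
    (hw : ℓ (s i * w) < ℓ w) {v : W} (h1 : bruhatLE cs u v) (h2 : bruhatLE cs v w) :
    bruhatLE cs u (s i * v) ∧ bruhatLE cs (s i * v) w := by
  have hvne : ℓ (s i * v) ≠ ℓ v := cs.length_simple_mul_ne v i
  constructor
  · rcases lt_or_gt_of_ne hvne with hlt | hgt
    · rcases Eleft cs i h1 with e1 | ⟨e2, e3⟩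
      · exact Relation.ReflTransGen.head (edge_simple_left cs i hu) e1
      · exact e3
    · exact h1.trans (edge_le cs (edge_simple_left cs i hgt))
  · rcases lt_or_gt_of_ne hvne with hlt | hgt
    · exact (edge_le cs (edge_simple_left' cs i hlt)).trans h2
    · rcases Eleft cs i h2 with e1 | ⟨e2, e3⟩
      · exact e1.trans (edge_le cs (edge_simple_left' cs i hw))
      · exact e2

lemma interval_closed_right (i : B) {u w : W} (hu : ℓ u < ℓ (u * s i))
    (hw : ℓ (w * s i) < ℓ w) {v : W} (h1 : bruhatLE cs u v) (h2 : bruhatLE cs v w) :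
    bruhatLE cs u (v * s i) ∧ bruhatLE cs (v * s i) w := by
  have hvne : ℓ (v * s i) ≠ ℓ v := cs.length_mul_simple_ne v i
  constructor
  · rcases lt_or_gt_of_ne hvne with hlt | hgt
    · rcases Eright cs i h1 with e1 | ⟨e2, e3⟩
      · exact Relation.ReflTransGen.head (edge_simple_right cs i hu) e1
      · exact e3
    · exact h1.trans (edge_le cs (edge_simple_right cs i hgt))
  · rcases lt_or_gt_of_ne hvne with hlt | hgt
    · exact (edge_le cs (edge_simple_right' cs i hlt)).trans h2
    · rcases Eright cs i h2 with e1 | ⟨e2, e3⟩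
      · exact e1.trans (edge_le cs (edge_simple_right' cs i hw))
      · exact e2

open scoped Classical in
lemma pairing_sum [Fintype W] (u w : W) (σ : W → W)
    (hinv : Function.Involutive σ)
    (hS : ∀ v, bruhatLE cs u v → bruhatLE cs v w →
      bruhatLE cs u (σ v) ∧ bruhatLE cs (σ v) w)
    (hlen : ∀ v, ℓ (σ v) ≠ ℓ v)
    (hedge : ∀ v, ℓ v < ℓ (σ v) → bruhatEdge cs v (σ v))
    (hC : ∀ v v', v' ≠ σ v → bruhatEdge cs v v' → bruhatEdge cs (σ v) (σ v')) :
    ∑ v ∈ Finset.univ.filter (fun v => bruhatLE cs u v ∧ bruhatLE cs v w),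
      (-1 : ℤ) ^ Set.ncard {v' : W | bruhatLE cs u v' ∧ bruhatLE cs v' w ∧ bruhatEdge cs v v'}
      = 0 := by
  have key : ∀ v, bruhatLE cs u v → bruhatLE cs v w → ℓ v < ℓ (σ v) →
      Set.ncard {v' : W | bruhatLE cs u v' ∧ bruhatLE cs v' w ∧ bruhatEdge cs v v'}
        = Set.ncard {v' : W | bruhatLE cs u v' ∧ bruhatLE cs v' w ∧ bruhatEdge cs (σ v) v'}
            + 1 := by
    intro v huv hvw hl
    have hnotmem : v ∉ {v' : W | bruhatLE cs u v' ∧ bruhatLE cs v' w ∧ bruhatEdge cs (σ v) v'} := by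
      rintro ⟨-, -, he⟩
      exact absurd (edge_length_lt cs he) (by omega)
    have himg : {v' : W | bruhatLE cs u v' ∧ bruhatLE cs v' w ∧ bruhatEdge cs v v'}
        = insert (σ v) (σ '' {v' : W | bruhatLE cs u v' ∧ bruhatLE cs v' w ∧ bruhatEdge cs (σ v) v'}) := by
      ext v'
      constructor
      · rintro ⟨h1, h2, he⟩
        by_cases hvs : v' = σ v
        · exact hvs ▸ Set.mem_insert _ _
        · refine Set.mem_insert_iff.mpr (Or.inr ?_)
          exact ⟨σ v', ⟨(hS v' h1 h2).1, (hS v' h1 h2).2, hC v v' hvs he⟩, hinv v'⟩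
      · intro hmem
        rcases Set.mem_insert_iff.mp hmem with rfl | ⟨v'', ⟨k1, k2, ke⟩, rfl⟩
        · exact ⟨(hS v huv hvw).1, (hS v huv hvw).2, hedge v hl⟩
        · have hne : v'' ≠ σ (σ v) := by
            rw [hinv]
            rintro rfl
            exact absurd (edge_length_lt cs ke) (by omega)
          have h8 := hC (σ v) v'' hne ke
          rw [hinv] at h8
          exact ⟨(hS v'' k1 k2).1, (hS v'' k1 k2).2, h8⟩
    have hninj : σ v ∉ σ '' {v' : W | bruhatLE cs u v' ∧ bruhatLE cs v' w ∧ bruhatEdge cs (σ v) v'} := by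
      rintro ⟨v'', hmem2, heq⟩
      exact hnotmem ((hinv.injective heq) ▸ hmem2)
    rw [himg, Set.ncard_insert_of_notMem hninj (Set.toFinite _),
      Set.ncard_image_of_injective _ hinv.injective]
  apply Finset.sum_involution (fun v _ => σ v)
  · intro v hv
    simp only [Finset.mem_filter] at hv
    obtain ⟨-, huv, hvw⟩ := hv
    obtain ⟨hus, hsw⟩ := hS v huv hvw
    rcases lt_or_gt_of_ne (hlen v) with hlt | hgt
    · have h7 := key (σ v) hus hsw (by rw [hinv]; exact hlt)
      rw [hinv] at h7
      rw [h7, pow_succ]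
      ring
    · have h7 := key v huv hvw hgt
      rw [h7, pow_succ]
      ring
  · intro v hv hf heq
    exact hlen v (by rw [heq])
  · intro v hv
    simp only [Finset.mem_filter] at hv ⊢
    exact ⟨Finset.mem_univ _, hS v hv.2.1 hv.2.2⟩
  · intro v hv
    exact hinv v

end Bruhat

end NC

open scoped Classical in
/-- Out-Eulerian property of noncritical Bruhat intervals. -/
theorem noncritical_out_eulerian [Fintype W]
    (cs : CoxeterSystem M W) (u w : W) (huw : bruhatLE cs u w)
    (hnc : ¬ (∀ i : B, cs.IsLeftDescent w i → cs.IsLeftDescent u i) ∨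
           ¬ (∀ i : B, cs.IsRightDescent w i → cs.IsRightDescent u i)) :
    ∑ v ∈ Finset.univ.filter (fun v => bruhatLE cs u v ∧ bruhatLE cs v w),
      (-1 : ℤ) ^ Set.ncard {v' : W | bruhatLE cs u v' ∧ bruhatLE cs v' w ∧ bruhatEdge cs v v'}
      = 0 := by
  rcases hnc with hL | hR
  · push_neg at hL
    obtain ⟨i, hwi, hui⟩ := hL
    have hw : cs.length (cs.simple i * w) < cs.length w := hwi
    have hu : cs.length u < cs.length (cs.simple i * u) := by
      have h1 : cs.length (cs.simple i * u) ≠ cs.length u := cs.length_simple_mul_ne u i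
      have h2 : ¬ cs.length (cs.simple i * u) < cs.length u := hui
      omega
    refine NC.pairing_sum cs u w (fun v => cs.simple i * v) ?_ ?_ ?_ ?_ ?_
    · intro v; exact cs.simple_mul_simple_cancel_left i
    · intro v h1 h2; exact NC.interval_closed_left cs i hu hw h1 h2
    · intro v; exact cs.length_simple_mul_ne v i
    · intro v h; exact NC.edge_simple_left cs i h
    · intro v v' hne he
      obtain ⟨t, ht, rfl, hlen⟩ := he
      have hts : t ≠ cs.simple i := by
        rintro rfl; exact hne rfl
      refine ⟨cs.simple i * t * cs.simple i, NC.conj_refl_simple cs i ht, ?_,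
        (NC.length_lt_iff_left cs i ht hts v).mp hlen⟩
      simp [mul_assoc, cs.simple_mul_simple_cancel_left]
  · push_neg at hR
    obtain ⟨i, hwi, hui⟩ := hR
    have hw : cs.length (w * cs.simple i) < cs.length w := hwi
    have hu : cs.length u < cs.length (u * cs.simple i) := by
      have h1 : cs.length (u * cs.simple i) ≠ cs.length u := cs.length_mul_simple_ne u i
      have h2 : ¬ cs.length (u * cs.simple i) < cs.length u := hui
      omega
    refine NC.pairing_sum cs u w (fun v => v * cs.simple i) ?_ ?_ ?_ ?_ ?_
    · intro v; exact cs.simple_mul_simple_cancel_right i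
    · intro v h1 h2; exact NC.interval_closed_right cs i hu hw h1 h2
    · intro v; exact cs.length_mul_simple_ne v i
    · intro v h; exact NC.edge_simple_right cs i h
    · intro v v' hne he
      obtain ⟨t, ht, rfl, hlen⟩ := he
      have hts : t * v ≠ v * cs.simple i := hne
      exact ⟨t, ht, mul_assoc t v (cs.simple i),
        (NC.length_lt_iff_right cs i ht v hts).mp hlen⟩
end

section
/- Let W be a finite Coxeter group, w ∈ W, and v ≤ w in Bruhat order. Let t be a reflection with t ∈ W_{D_L(w)}. Then out_w(tv) − out_w(v) is odd, where out_w(x) = |{y ≤ w : x → y in the Bruhat graph}|. -/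
open CoxeterSystem

variable {B W : Type*} [Group W] {M : CoxeterMatrix B}

/-- Out-degree in the lower interval `[e, w]`. -/
noncomputable def outDeg (cs : CoxeterSystem M W) (w x : W) : ℕ :=
  Set.ncard {y : W | bruhatLE cs y w ∧ bruhatEdge cs x y}

namespace BruhatAux

set_option linter.unusedSectionVars false

/-! ### The reflection cocycle, built via a semidirect product -/

abbrev NN (W : Type*) := W → Multiplicative (ZMod 2)

lemma mul_self_NN (n : NN W) : n * n = 1 := by
  funext t
  show n t * n t = 1
  have : ∀ x : Multiplicative (ZMod 2), x * x = 1 := by decide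
  exact this (n t)

noncomputable def chi (u : W) : NN W := fun t =>
  letI := Classical.decEq W
  if t = u then Multiplicative.ofAdd 1 else 1

def muFun (w : W) : MulAut (NN W) where
  toFun f := fun t => f (w⁻¹ * t * w)
  invFun f := fun t => f (w * t * w⁻¹)
  left_inv f := by funext t; simp [mul_assoc]
  right_inv f := by funext t; simp [mul_assoc]
  map_mul' f g := rfl

def mu (W : Type*) [Group W] : W →* MulAut (NN W) where
  toFun := muFun
  map_one' := by ext f t; simp [muFun]
  map_mul' u v := by ext f t; simp [muFun, mul_assoc]

lemma mu_apply (w : W) (f : NN W) (t : W) : mu W w f t = f (w⁻¹ * t * w) := rfl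

lemma mu_chi (w u : W) : mu W w (chi u) = chi (w * u * w⁻¹) := by
  funext t
  rw [mu_apply]
  unfold chi
  letI := Classical.decEq W
  congr 1
  simp only [eq_iff_iff]
  constructor
  · rintro h; rw [← h]; group
  · rintro h; rw [h]; group

abbrev GG (W : Type*) [Group W] := SemidirectProduct (NN W) W (mu W)

lemma pow_mk (n : NN W) (g : W) (m : ℕ) :
    (⟨n, g⟩ : GG W) ^ m = ⟨∏ r ∈ Finset.range m, mu W (g ^ r) n, g ^ m⟩ := by
  induction m with
  | zero => simp
  | succ m ih =>
    rw [pow_succ, ih, SemidirectProduct.mul_def]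
    congr 1
    · simp [Finset.prod_range_succ]
    · rw [pow_succ]

lemma prod_double (f : ℕ → NN W) (m : ℕ) :
    ∏ r ∈ Finset.range m, (f (2 * r) * f (2 * r + 1)) = ∏ k ∈ Finset.range (2 * m), f k := by
  induction m with
  | zero => simp
  | succ m ih =>
    rw [Finset.prod_range_succ, ih, show 2 * (m + 1) = (2 * m + 1) + 1 from by omega,
      Finset.prod_range_succ, Finset.prod_range_succ, mul_assoc]

noncomputable def xgen (cs : CoxeterSystem M W) (i : B) : GG W :=
  ⟨chi (cs.simple i), cs.simple i⟩

lemma xgen_liftable (cs : CoxeterSystem M W) : M.IsLiftable (xgen cs) := by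
  intro i j
  set a := cs.simple i with ha
  set b := cs.simple j with hb
  have haa : a * a = 1 := cs.simple_mul_simple_self i
  have hbb : b * b = 1 := cs.simple_mul_simple_self j
  have hainv : a⁻¹ = a := inv_eq_of_mul_eq_one_right haa
  have hbinv : b⁻¹ = b := inv_eq_of_mul_eq_one_right hbb
  set c := a * b with hc
  have hcm : c ^ M i j = 1 := cs.simple_mul_simple_pow i j
  have hACA : a * c * a⁻¹ = c⁻¹ := by
    calc a * c * a⁻¹ = a * a * b * a := by rw [hc, hainv]; group
    _ = b * a := by rw [haa, one_mul]
    _ = c⁻¹ := by rw [hc, mul_inv_rev, hainv, hbinv]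
  have hc1 : ∀ r : ℕ, a * (c ^ r)⁻¹ * a⁻¹ = c ^ r := by
    intro r
    have e : a * (c ^ r)⁻¹ * a⁻¹ = (MulAut.conj a) ((c ^ r)⁻¹) := by
      rw [MulAut.conj_apply]
    rw [e, map_inv, map_pow, MulAut.conj_apply, hACA, ← inv_pow, inv_inv]
  have key1 : ∀ r : ℕ, c ^ r * a * (c ^ r)⁻¹ = c ^ (2 * r) * a := by
    intro r
    have e : c ^ r * a * (c ^ r)⁻¹ = c ^ r * (a * (c ^ r)⁻¹ * a⁻¹) * a := by group
    rw [e, hc1, ← pow_add, ← two_mul]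
  have key2 : ∀ r : ℕ, c ^ r * (c * a) * (c ^ r)⁻¹ = c ^ (2 * r + 1) * a := by
    intro r
    have e : c ^ r * (c * a) * (c ^ r)⁻¹ = c ^ (r + 1) * (a * (c ^ r)⁻¹ * a⁻¹) * a := by
      rw [pow_succ]; group
    rw [e, hc1, ← pow_add, show r + 1 + r = 2 * r + 1 from by omega]
  have hxy : xgen cs i * xgen cs j = ⟨chi a * chi (c * a), c⟩ := by
    rw [xgen, xgen, SemidirectProduct.mul_def]
    congr 2
    rw [mu_chi, hainv, hc, mul_assoc]
  rw [hxy, pow_mk]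
  have hterm : ∀ r : ℕ, mu W (c ^ r) (chi a * chi (c * a)) =
      chi (c ^ (2 * r)  * a) * chi (c ^ (2 * r + 1) * a) := by
    intro r
    rw [map_mul, mu_chi, mu_chi, key1 r, key2 r]
  have hfinal : ∏ r ∈ Finset.range (M i j), mu W (c ^ r) (chi a * chi (c * a)) = (1 : NN W) := by
    rw [Finset.prod_congr rfl (fun r _ => hterm r), prod_double (fun k => chi (c ^ k * a)) (M i j),
      two_mul, Finset.prod_range_add]
    have hper : ∀ k : ℕ, chi (c ^ (M i j + k) * a) = chi (c ^ k * a) := by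
      intro k
      rw [pow_add, hcm, one_mul]
    rw [Finset.prod_congr rfl (fun k _ => hper k), ← Finset.prod_mul_distrib,
      Finset.prod_congr rfl (fun k _ => mul_self_NN _)]
    simp
  rw [hfinal, hcm]
  rfl

noncomputable def phi (cs : CoxeterSystem M W) : W →* GG W :=
  cs.lift ⟨xgen cs, xgen_liftable cs⟩

lemma phi_simple (cs : CoxeterSystem M W) (i : B) : phi cs (cs.simple i) = xgen cs i :=
  cs.lift_apply_simple (xgen_liftable cs) i

lemma phi_right (cs : CoxeterSystem M W) (w : W) : (phi cs w).right = w := by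
  have : (SemidirectProduct.rightHom.comp (phi cs)) = MonoidHom.id W := by
    apply cs.ext_simple
    intro i
    simp [phi_simple, xgen, SemidirectProduct.rightHom]
  calc (phi cs w).right = (SemidirectProduct.rightHom.comp (phi cs)) w := rfl
  _ = w := by rw [this]; rfl

noncomputable def eta (cs : CoxeterSystem M W) (w : W) : NN W := (phi cs w).left

lemma eta_one (cs : CoxeterSystem M W) : eta cs 1 = 1 := by
  unfold eta; rw [map_one]; rfl

lemma eta_mul (cs : CoxeterSystem M W) (u v : W) (t : W) :
    eta cs (u * v) t = eta cs u t * eta cs v (u⁻¹ * t * u) := by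
  unfold eta
  rw [map_mul, SemidirectProduct.mul_left, Pi.mul_apply, phi_right, mu_apply]

lemma eta_simple (cs : CoxeterSystem M W) (i : B) : eta cs (cs.simple i) = chi (cs.simple i) := by
  unfold eta; rw [phi_simple]; rfl

lemma chi_self (u : W) : chi u u = Multiplicative.ofAdd 1 := by
  unfold chi; simp

lemma chi_ne (u t : W) (h : t ≠ u) : chi u t = 1 := by
  unfold chi
  letI := Classical.decEq W
  simp [h]

lemma mult_cases (x : Multiplicative (ZMod 2)) : x = 1 ∨ x = Multiplicative.ofAdd 1 := by
  revert x; decide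

lemma mult_sq (x : Multiplicative (ZMod 2)) : x * x = 1 := by revert x; decide

lemma mult_inv (x : Multiplicative (ZMod 2)) : x⁻¹ = x := by revert x; decide

lemma ofAdd_one_ne_one : (Multiplicative.ofAdd (1 : ZMod 2)) ≠ 1 := by decide

lemma eta_inv (cs : CoxeterSystem M W) (w t : W) :
    eta cs w⁻¹ t = eta cs w (w * t * w⁻¹) := by
  have h := eta_mul cs w w⁻¹ (w * t * w⁻¹)
  rw [mul_inv_cancel, eta_one] at h
  have h2 : w⁻¹ * (w * t * w⁻¹) * w = t := by group
  rw [h2] at h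
  have h' : eta cs w (w * t * w⁻¹) * eta cs w⁻¹ t = 1 := by rw [← h]; rfl
  rw [← inv_eq_of_mul_eq_one_right h', mult_inv]

lemma eta_refl_self (cs : CoxeterSystem M W) {t : W} (ht : cs.IsReflection t) :
    eta cs t t = Multiplicative.ofAdd 1 := by
  obtain ⟨w, i, rfl⟩ := ht
  set a := cs.simple i with ha
  have haa : a * a = 1 := cs.simple_mul_simple_self i
  set t := w * a * w⁻¹ with hT
  have h1 : eta cs (w * (a * w⁻¹)) t = eta cs w t * eta cs (a * w⁻¹) (w⁻¹ * t * w) := eta_mul ..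
  have e1 : w * (a * w⁻¹) = t := by rw [hT]; group
  have e2 : w⁻¹ * t * w = a := by rw [hT]; group
  rw [e1, e2] at h1
  have h2 : eta cs (a * w⁻¹) a = eta cs a a * eta cs w⁻¹ (a⁻¹ * a * a) := eta_mul ..
  have e3 : a⁻¹ * a * a = a := by group
  rw [e3] at h2
  have h3 : eta cs w⁻¹ a = eta cs w (w * a * w⁻¹) := eta_inv ..
  have h4 : eta cs a a = Multiplicative.ofAdd 1 := by rw [eta_simple]; exact chi_self a
  rw [h1, h2, h3, h4, ← hT]
  have := mult_sq (eta cs w t)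
  rcases mult_cases (eta cs w t) with hx | hx <;> rw [hx] <;> decide

lemma isLeftInversion_of_eta (cs : CoxeterSystem M W) (w : W) :
    ∀ t : W, cs.IsReflection t → eta cs w t = Multiplicative.ofAdd 1 →
      cs.IsLeftInversion w t := by
  suffices H : ∀ n (w : W), cs.length w = n → ∀ t : W, cs.IsReflection t →
      eta cs w t = Multiplicative.ofAdd 1 → cs.IsLeftInversion w t by
    exact H (cs.length w) w rfl
  intro n
  induction n using Nat.strong_induction_on with
  | _ n ih =>
  intro w hn t ht het
  rcases eq_or_ne w 1 with rfl | hw1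
  · rw [eta_one] at het
    exact absurd het.symm ofAdd_one_ne_one
  · obtain ⟨i, hi⟩ := cs.exists_leftDescent_of_ne_one hw1
    set a := cs.simple i with ha
    have haa : a * a = 1 := cs.simple_mul_simple_self i
    have hainv : a⁻¹ = a := inv_eq_of_mul_eq_one_right haa
    rcases eq_or_ne t a with rfl | hta
    · exact ⟨ht, hi⟩
    · set w' := a * w with hw'
      have hww : w = a * w' := by rw [hw', ← mul_assoc, haa, one_mul]
      have hlw' : cs.length w' < cs.length w := hi
      have hmul := eta_mul cs a w' t
      rw [← hww] at hmul
      rw [hmul, eta_simple, chi_ne a t hta, one_mul, hainv] at het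
      have ht' : cs.IsReflection (a * t * a) := by
        have := ht.conj a
        rwa [hainv] at this
      have hinv' : cs.IsLeftInversion w' (a * t * a) :=
        ih (cs.length w') (hn ▸ hlw') w' rfl _ ht' het
      constructor
      · exact ht
      · have e : (a * t * a) * w' = a * (t * w) := by
          rw [hw', show a * t * a * (a * w) = a * t * (a * a) * w from by group, haa]; group
        have h5 : cs.length ((a * t * a) * w') < cs.length w' := hinv'.2
        have h6 : cs.length (t * w) ≤ cs.length (a * (t * w)) + 1 := by
          rcases cs.length_simple_mul (t * w) i with h | h <;> rw [← ha] at h <;> omega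
        rw [e] at h5
        omega

lemma eta_iff_isLeftInversion (cs : CoxeterSystem M W) (w t : W) (ht : cs.IsReflection t) :
    eta cs w t = Multiplicative.ofAdd 1 ↔ cs.IsLeftInversion w t := by
  constructor
  · exact isLeftInversion_of_eta cs w t ht
  · intro hinv
    rcases mult_cases (eta cs w t) with hx | hx
    swap
    · exact hx
    exfalso
    set u := t * w with hu
    have htt : t * t = 1 := ht.mul_self
    have hw : w = t * u := by rw [hu, ← mul_assoc, htt, one_mul]
    have hmul := eta_mul cs t u t
    rw [← hw] at hmul
    have e : t⁻¹ * t * t = t := by group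
    rw [e, eta_refl_self cs ht, hx] at hmul
    have hut : eta cs u t = Multiplicative.ofAdd 1 := by
      rcases mult_cases (eta cs u t) with hy | hy
      · rw [hy] at hmul; exact absurd hmul.symm (by decide)
      · exact hy
    have := (isLeftInversion_of_eta cs u t ht hut).2
    rw [← hw] at this
    have : cs.length w < cs.length w := lt_trans this hinv.2
    omega

lemma chi_conj (g u t : W) : chi (g * u * g⁻¹) t = chi u (g⁻¹ * t * g) := by
  unfold chi
  letI := Classical.decEq W
  congr 1
  simp only [eq_iff_iff]
  constructor
  · rintro h; rw [h]; group
  · rintro h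
    have : t = g * (g⁻¹ * t * g) * g⁻¹ := by group
    rw [this, h]

lemma prod_chi_conj (g : W) (L : List W) (t : W) :
    ((L.map (fun u => (MulAut.conj g) u)).map chi).prod t = ((L.map chi).prod) (g⁻¹ * t * g) := by
  induction L with
  | nil => rfl
  | cons u L ih =>
    simp only [List.map_cons, List.prod_cons, Pi.mul_apply]
    rw [ih, MulAut.conj_apply, chi_conj]

lemma eta_wordProd (cs : CoxeterSystem M W) (ω : List B) :
    eta cs (cs.wordProd ω) = ((cs.leftInvSeq ω).map chi).prod := by
  induction ω with
  | nil => rw [wordProd_nil, eta_one]; rfl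
  | cons i ω ih =>
    funext t
    have hlis : cs.leftInvSeq (i :: ω) =
        cs.simple i :: List.map (MulAut.conj (cs.simple i)) (cs.leftInvSeq ω) := rfl
    rw [cs.wordProd_cons, eta_mul, eta_simple, ih, hlis]
    simp only [List.map_cons, List.prod_cons, Pi.mul_apply]
    congr 1
    rw [← prod_chi_conj (cs.simple i) (cs.leftInvSeq ω) t]

lemma prod_chi_nodup (L : List W) (h : L.Nodup) (t : W) (htL : t ∉ L) :
    ((L.map chi).prod) t = 1 := by
  induction L with
  | nil => rfl
  | cons u L ih =>
    simp only [List.map_cons, List.prod_cons, Pi.mul_apply]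
    rw [chi_ne u t (fun he => htL (he ▸ List.mem_cons_self (a := u) (l := L))),
      ih (List.nodup_cons.mp h).2 (fun hm => htL (List.mem_cons_of_mem u hm)), one_mul]

lemma isLeftInversion_iff_mem_lis (cs : CoxeterSystem M W) {ω : List B} (hω : cs.IsReduced ω)
    (t : W) : cs.IsLeftInversion (cs.wordProd ω) t ↔ t ∈ cs.leftInvSeq ω := by
  constructor
  · intro hinv
    have heta := (eta_iff_isLeftInversion cs _ t hinv.1).2 hinv
    rw [eta_wordProd] at heta
    by_contra htL
    rw [prod_chi_nodup _ (hω.nodup_leftInvSeq) t htL] at heta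
    exact ofAdd_one_ne_one heta.symm
  · exact cs.isLeftInversion_of_mem_leftInvSeq hω

lemma ncard_leftInversions (cs : CoxeterSystem M W) (w : W) :
    {t | cs.IsLeftInversion w t}.ncard = cs.length w := by
  obtain ⟨ω, hred, rfl⟩ := cs.exists_reduced_word' w
  letI := Classical.decEq W
  have hset : {t | cs.IsLeftInversion (cs.wordProd ω) t} = ↑(cs.leftInvSeq ω).toFinset := by
    ext t
    simp only [Set.mem_setOf_eq, Finset.coe_sort_coe, Finset.mem_coe, List.mem_toFinset]
    exact isLeftInversion_iff_mem_lis cs hred t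
  rw [hset, Set.ncard_coe_finset, List.toFinset_card_of_nodup (hred.nodup_leftInvSeq),
    cs.length_leftInvSeq, hred]

/-! ### The lifting property for Bruhat order -/

lemma exchange_key (cs : CoxeterSystem M W) {i : B} {r x : W} (hr : cs.IsReflection r)
    (hx : cs.length x < cs.length (cs.simple i * x))
    (hy : cs.length x < cs.length (r * x))
    (hsy : cs.length (cs.simple i * (r * x)) < cs.length (r * x)) :
    cs.simple i * x = r * x ∨
      cs.length (cs.simple i * x) < cs.length (cs.simple i * (r * x)) := by
  set a := cs.simple i with ha
  have haa : a * a = 1 := cs.simple_mul_simple_self i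
  have hainv : a⁻¹ = a := inv_eq_of_mul_eq_one_right haa
  rcases eq_or_ne r a with rfl | hra
  · exact Or.inl rfl
  set y := r * x with hyx
  have hconj : a * y = (a * r * a) * (a * x) := by
    rw [hyx, show a * r * a * (a * x) = a * r * (a * a) * x from by group, haa]; group
  have hrefl' : cs.IsReflection (a * r * a) := by
    have := hr.conj a; rwa [hainv] at this
  have hne : cs.length (a * y) ≠ cs.length (a * x) := by
    rw [hconj]; exact hrefl'.length_mul_right_ne (a * x)
  rcases lt_or_gt_of_ne hne with hlt | hgt
  swap
  · exact Or.inr hgt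
  exfalso
  have h1 : cs.length (a * x) = cs.length x + 1 := by
    rcases cs.length_simple_mul x i with h | h
    · rw [← ha] at h; exact h
    · rw [← ha] at h; omega
  have h2 : cs.length y = cs.length (a * y) + 1 := by
    rcases cs.length_simple_mul y i with h | h
    · rw [← ha] at h; omega
    · rw [← ha] at h; omega
  have h3 : cs.length (a * y) = cs.length x := by omega
  obtain ⟨p, hp, hpe⟩ := cs.exists_reduced_word' (a * y)
  have hπ : cs.wordProd (i :: p) = y := by
    rw [cs.wordProd_cons, ← hpe, ← ha, ← mul_assoc, haa, one_mul]
  have hred : cs.IsReduced (i :: p) := by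
    show cs.length (cs.wordProd (i :: p)) = (i :: p).length
    rw [hπ, List.length_cons]
    have : p.length = cs.length (a * y) := by
      rw [hpe] at *; exact (hp.symm : _)
    omega
  have hrinv : cs.IsLeftInversion (cs.wordProd (i :: p)) r := by
    rw [hπ]
    refine ⟨hr, ?_⟩
    have : r * y = x := by rw [hyx, ← mul_assoc, hr.mul_self, one_mul]
    rw [this]; omega
  have hmem := (isLeftInversion_iff_mem_lis cs hred r).1 hrinv
  have hlis : cs.leftInvSeq (i :: p) =
      cs.simple i :: List.map (MulAut.conj (cs.simple i)) (cs.leftInvSeq p) := rfl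
  rw [hlis] at hmem
  rcases List.mem_cons.mp hmem with hcase | hcase
  · exact hra (by rw [hcase, ha])
  · obtain ⟨u, hu, hur⟩ := List.mem_map.mp hcase
    have huinv : cs.IsLeftInversion (cs.wordProd p) u :=
      (isLeftInversion_iff_mem_lis cs hp u).2 hu
    have hulen : cs.length (u * (a * y)) < cs.length x := by
      have := huinv.2
      rw [← hpe] at this
      omega
    have hax : a * x = u * (a * y) := by
      have hxr : x = r * y := by rw [hyx, ← mul_assoc, hr.mul_self, one_mul]
      have e0 : a * x = a * r * y := by rw [hxr]; group
      rw [e0, ← hur, MulAut.conj_apply, ← ha, hainv,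
        show a * (a * u * a) * y = a * a * (u * (a * y)) from by group, haa, one_mul]
    rw [hax] at h1
    omega

lemma descent_lift (cs : CoxeterSystem M W) {w : W} {i : B} (hi : cs.IsLeftDescent w i) :
    ∀ x, bruhatLE cs x w → bruhatLE cs (cs.simple i * x) w := by
  intro x hx
  induction hx using Relation.ReflTransGen.head_induction_on with
  | refl =>
    refine Relation.ReflTransGen.single ⟨cs.simple i, cs.isReflection_simple i, ?_, hi⟩
    rw [cs.simple_mul_simple_cancel_left]
  | head hab hbc ih =>
    rename_i x y
    obtain ⟨r, hr, hyx, hlen⟩ := hab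
    have key_edge : ∀ u v : W, bruhatEdge cs u v → bruhatLE cs v w → bruhatLE cs u w :=
      fun u v he hv => Relation.ReflTransGen.head he hv
    rcases cs.length_simple_mul x i with hax | hax
    · rcases cs.length_simple_mul y i with hay | hay
      · refine key_edge _ _ ⟨cs.simple i * r * (cs.simple i)⁻¹, hr.conj _, ?_, ?_⟩ ih
        · rw [hyx]; group
        · rw [hax, hay]; omega
      · subst hyx
        have := exchange_key cs (i := i) hr (by omega) hlen (by omega)
        rcases this with heq | hlt
        · rw [heq]; exact hbc
        · refine key_edge _ _ ⟨cs.simple i * r * (cs.simple i)⁻¹, hr.conj _, ?_, hlt⟩ ih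
          group
    · have hxw : bruhatLE cs x w := Relation.ReflTransGen.head ⟨r, hr, hyx, hlen⟩ hbc
      refine key_edge _ _ ⟨cs.simple i, cs.isReflection_simple i, ?_, by omega⟩ hxw
      rw [cs.simple_mul_simple_cancel_left]

lemma parabolic_lift (cs : CoxeterSystem M W) {w : W} {t : W}
    (htP : t ∈ parabolic cs {i : B | cs.IsLeftDescent w i}) :
    ∀ x, bruhatLE cs x w → bruhatLE cs (t * x) w := by
  refine (Subgroup.closure_induction (k := cs.simple '' {i : B | cs.IsLeftDescent w i})
    (p := fun u _ => (∀ x, bruhatLE cs x w → bruhatLE cs (u * x) w) ∧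
      (∀ x, bruhatLE cs x w → bruhatLE cs (u⁻¹ * x) w)) ?_ ?_ ?_ ?_ htP).1
  · rintro u ⟨i, hiD, rfl⟩
    constructor
    · exact descent_lift cs hiD
    · rw [cs.inv_simple]; exact descent_lift cs hiD
  · constructor <;> intro x hx <;> simpa using hx
  · rintro u v _ _ ⟨hu1, hu2⟩ ⟨hv1, hv2⟩
    constructor
    · intro x hx; rw [mul_assoc]; exact hu1 _ (hv1 _ hx)
    · intro x hx; rw [mul_inv_rev, mul_assoc]; exact hv2 _ (hu2 _ hx)
  · rintro u _ ⟨hu1, hu2⟩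
    exact ⟨hu2, by simpa using hu1⟩

/-! ### Degree counting -/

lemma outDeg_eq (cs : CoxeterSystem M W) (w x : W) :
    outDeg cs w x = Set.ncard {r : W | cs.IsReflection r ∧
      cs.length x < cs.length (r * x) ∧ bruhatLE cs (r * x) w} := by
  rw [outDeg]
  have himg : {y : W | bruhatLE cs y w ∧ bruhatEdge cs x y} =
      (fun r => r * x) '' {r : W | cs.IsReflection r ∧
        cs.length x < cs.length (r * x) ∧ bruhatLE cs (r * x) w} := by
    ext y
    constructor
    · rintro ⟨hle, r, hr, rfl, hlen⟩
      exact ⟨r, ⟨hr, hlen, hle⟩, rfl⟩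
    · rintro ⟨r, ⟨hr, hlen, hle⟩, rfl⟩
      exact ⟨hle, r, hr, rfl, hlen⟩
  rw [himg, Set.ncard_image_of_injective _ (mul_left_injective x)]

lemma ncard_refl_le [Finite W] (cs : CoxeterSystem M W) (w x : W) (hx : bruhatLE cs x w) :
    Set.ncard {r : W | cs.IsReflection r ∧ bruhatLE cs (r * x) w} =
      outDeg cs w x + cs.length x := by
  have hsub : {r : W | cs.IsLeftInversion x r} ⊆
      {r : W | cs.IsReflection r ∧ bruhatLE cs (r * x) w} := by
    rintro r ⟨hr, hlen⟩
    refine ⟨hr, Relation.ReflTransGen.trans (Relation.ReflTransGen.single ?_) hx⟩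
    exact ⟨r, hr, by rw [← mul_assoc, hr.mul_self, one_mul], hlen⟩
  have hunion : {r : W | cs.IsReflection r ∧ bruhatLE cs (r * x) w} =
      {r : W | cs.IsReflection r ∧ cs.length x < cs.length (r * x) ∧ bruhatLE cs (r * x) w} ∪
      {r : W | cs.IsLeftInversion x r} := by
    ext r
    constructor
    · rintro ⟨hr, hle⟩
      rcases lt_or_gt_of_ne (hr.length_mul_right_ne x) with hlt | hgt
      · exact Or.inr ⟨hr, hlt⟩
      · exact Or.inl ⟨hr, hgt, hle⟩
    · rintro (⟨hr, hlen, hle⟩ | hmem)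
      · exact ⟨hr, hle⟩
      · exact hsub hmem
  have hdisj : Disjoint
      {r : W | cs.IsReflection r ∧ cs.length x < cs.length (r * x) ∧ bruhatLE cs (r * x) w}
      {r : W | cs.IsLeftInversion x r} := by
    rw [Set.disjoint_left]
    rintro r ⟨_, hlt, _⟩ ⟨_, hlt'⟩
    omega
  rw [hunion, Set.ncard_union_eq hdisj (Set.toFinite _) (Set.toFinite _),
    ncard_leftInversions cs x, ← outDeg_eq]

theorem outDeg_parity' [Finite W]
    (cs : CoxeterSystem M W) (w v : W) (hv : bruhatLE cs v w) (t : W)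
    (ht : cs.IsReflection t)
    (htP : t ∈ parabolic cs {i : B | cs.IsLeftDescent w i}) :
    Odd ((outDeg cs w (t * v) : ℤ) - (outDeg cs w v : ℤ)) := by
  have htinv : t⁻¹ = t := ht.inv
  have htv : bruhatLE cs (t * v) w := parabolic_lift cs htP v hv
  have hbij : {r : W | cs.IsReflection r ∧ bruhatLE cs (r * (t * v)) w} =
      (fun r => t * r * t⁻¹) '' {r : W | cs.IsReflection r ∧ bruhatLE cs (r * v) w} := by
    ext r'
    constructor
    · rintro ⟨hr', hle'⟩
      refine ⟨t⁻¹ * r' * t, ?_, ?_⟩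
      · constructor
        · have := hr'.conj t⁻¹
          rwa [inv_inv] at this
        · have e : (t⁻¹ * r' * t) * v = t⁻¹ * (r' * (t * v)) := by group
          rw [e, htinv]
          exact parabolic_lift cs htP _ hle'
      · group
    · rintro ⟨r, ⟨hr, hle⟩, rfl⟩
      refine ⟨hr.conj t, ?_⟩
      have e : (t * r * t⁻¹) * (t * v) = t * (r * v) := by group
      rw [e]
      exact parabolic_lift cs htP _ hle
  have hinj : Function.Injective (fun r : W => t * r * t⁻¹) := by
    intro r1 r2 h
    have h' : t * r1 * t⁻¹ = t * r2 * t⁻¹ := h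
    exact mul_left_cancel (mul_right_cancel h')
  have e1 := ncard_refl_le cs w (t * v) htv
  have e2 := ncard_refl_le cs w v hv
  rw [hbij, Set.ncard_image_of_injective _ hinj, e2] at e1
  have hpar := cs.length_mul_mod_two t v
  have hodd : cs.length t % 2 = 1 := Nat.odd_iff.mp ht.odd_length
  rw [Int.odd_iff]
  omega

end BruhatAux

/-- The out-degrees of `v` and `tv` in `[e, w]` differ by an odd number, for `t` a reflection
lying in the parabolic subgroup generated by the left descents of `w`. -/
theorem outDeg_parity [Finite W]
    (cs : CoxeterSystem M W) (w v : W) (hv : bruhatLE cs v w) (t : W)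
    (ht : cs.IsReflection t)
    (htP : t ∈ parabolic cs {i : B | cs.IsLeftDescent w i}) :
    Odd ((outDeg cs w (t * v) : ℤ) - (outDeg cs w v : ℤ)) := by
  exact BruhatAux.outDeg_parity' cs w v hv t ht htP
end

section
/- Let W be a finite Coxeter group, I ⊆ S, and x ∈ W. Then the (one-sided) coset W_I x is an ℓ(w₀(I))-regular subgraph of the Bruhat graph, where w₀(I) is the longest element of W_I: every element of W_I x is incident to exactly ℓ(w₀(I)) Bruhat-graph edges within W_I x. -/
open CoxeterSystem

variable {B W : Type*} [Group W] {M : CoxeterMatrix B}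

section SEAuxSection
open List

namespace SEAux

section GenericGroup

variable {G : Type*} [Group G] {a b p : G}

lemma conj_eq_iff {z : G} (x y t : G) : x * t * y = z ↔ t = x⁻¹ * z * y⁻¹ := by
  constructor <;> intro h
  · rw [← h]; group
  · rw [h]; group

variable (hainv : a⁻¹ = a) (hbinv : b⁻¹ = b) (hp : p = a * b)

include hainv hbinv hp

lemma hba : b * a = p⁻¹ := by rw [hp, mul_inv_rev, hainv, hbinv]

lemma hbp : b * p = p⁻¹ * b := by
  rw [hp, ← mul_assoc, hba hainv hbinv hp, hp]

lemma L (k : ℕ) : b * p ^ k = (p ^ k)⁻¹ * b := by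
  induction k with
  | zero => simp
  | succ k ih =>
      calc b * p ^ (k + 1) = (b * p ^ k) * p := by rw [pow_succ, mul_assoc]
        _ = (p ^ k)⁻¹ * (b * p) := by rw [ih]; group
        _ = (p ^ k)⁻¹ * (p⁻¹ * b) := by rw [hbp hainv hbinv hp]
        _ = (p ^ (k + 1))⁻¹ * b := by group

lemma C1 (k : ℕ) (t : G) :
    (p ^ k * t * (p ^ k)⁻¹ = b) ↔ t = (p ^ (2 * k))⁻¹ * b := by
  have hv : (p ^ k)⁻¹ * b * ((p ^ k)⁻¹)⁻¹ = (p ^ (2 * k))⁻¹ * b := by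
    rw [inv_inv, mul_assoc, L hainv hbinv hp]; group
  rw [conj_eq_iff, hv]

lemma C2 (k : ℕ) (t : G) :
    (b * (p ^ k * t * (p ^ k)⁻¹) * b = a) ↔ t = (p ^ (2 * k + 1))⁻¹ * b := by
  have hv : b⁻¹ * a * b⁻¹ = p⁻¹ * b := by
    rw [hbinv, hba hainv hbinv hp]
  have hv2 : (p ^ k)⁻¹ * (p⁻¹ * b) * ((p ^ k)⁻¹)⁻¹ = (p ^ (2 * k + 1))⁻¹ * b := by
    rw [inv_inv, mul_assoc, mul_assoc, L hainv hbinv hp]; group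
  rw [conj_eq_iff, hv, conj_eq_iff, hv2]

lemma C0 (k : ℕ) (t : G) :
    a * (b * (p ^ k * t * (p ^ k)⁻¹) * b) * a
      = p ^ (k + 1) * t * (p ^ (k + 1))⁻¹ := by
  calc a * (b * (p ^ k * t * (p ^ k)⁻¹) * b) * a
      = (a * b * p ^ k) * t * ((p ^ k)⁻¹ * (b * a)) := by group
    _ = (p * p ^ k) * t * ((p ^ k)⁻¹ * p⁻¹) := by rw [hba hainv hbinv hp, ← hp]
    _ = p ^ (k + 1) * t * (p ^ (k + 1))⁻¹ := by group

end GenericGroup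

lemma sq_conj_eq_self {G : Type*} [Group G] {a : G} (ha : a * a = 1) (t : G) :
    a * (a * t * a) * a = t := by
  have h : a * (a * t * a) * a = (a * a) * t * (a * a) := by group
  rw [h, ha]; simp

lemma sq_cond {G : Type*} [Group G] {a : G} (hainv : a⁻¹ = a) (ha : a * a = 1) (t : G) :
    (a * t * a = a) ↔ t = a := by
  rw [conj_eq_iff, hainv, ha, one_mul]

noncomputable local instance insta {W : Type*} : DecidableEq W := Classical.decEq W

variable {B W : Type*} [Group W] {M : CoxeterMatrix B} (cs : CoxeterSystem M W)

local prefix:100 "s" => cs.simple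
local prefix:100 "π" => cs.wordProd
local prefix:100 "ℓ" => cs.length

/-- Tits' sign permutation attached to a simple reflection. -/
noncomputable def sigmaFun (i : B) : W × ZMod 2 → W × ZMod 2 :=
  fun x => (s i * x.1 * s i, x.2 + if x.1 = s i then 1 else 0)

lemma sigmaFun_invol (i : B) : Function.Involutive (sigmaFun cs i) := by
  rintro ⟨t, e⟩
  simp only [sigmaFun]
  refine Prod.ext (sq_conj_eq_self (cs.simple_mul_simple_self i) t) ?_
  simp only [sq_cond (cs.inv_simple i) (cs.simple_mul_simple_self i)]
  rcases eq_or_ne t (s i) with h | h <;> simp [h, add_assoc, CharTwo.add_self_eq_zero]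

noncomputable def sigma (i : B) : Equiv.Perm (W × ZMod 2) :=
  (sigmaFun_invol cs i).toPerm

lemma sigma_apply (i : B) (t : W) (e : ZMod 2) :
    sigma cs i (t, e) = (s i * t * s i, e + if t = s i then 1 else 0) := rfl

lemma sigma_pow_apply (i j : B) (k : ℕ) (t : W) (e : ZMod 2) :
    ((sigma cs i * sigma cs j) ^ k) (t, e) =
      ((s i * s j) ^ k * t * ((s i * s j) ^ k)⁻¹,
        e + ∑ l ∈ Finset.range (2 * k), if t = ((s i * s j) ^ l)⁻¹ * s j then 1 else 0) := by
  have hainv := cs.inv_simple i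
  have hbinv := cs.inv_simple j
  have hp : s i * s j = s i * s j := rfl
  induction k with
  | zero => simp
  | succ k ih =>
      have hstep : ((sigma cs i * sigma cs j) ^ (k + 1)) (t, e)
          = (sigma cs i) ((sigma cs j) (((sigma cs i * sigma cs j) ^ k) (t, e))) := by
        rw [pow_succ']; rfl
      rw [hstep, ih, sigma_apply, sigma_apply]
      simp only [C1 hainv hbinv hp k t, C2 hainv hbinv hp k t]
      refine Prod.ext (C0 hainv hbinv hp k t) ?_
      have hsum : (2 * (k + 1)) = (2 * k) + 1 + 1 := by omega
      rw [hsum, Finset.sum_range_succ, Finset.sum_range_succ]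
      ring

lemma isLiftable : M.IsLiftable (sigma cs) := by
  intro i j
  apply Equiv.ext
  rintro ⟨t, e⟩
  rw [sigma_pow_apply, cs.simple_mul_simple_pow i j]
  have h2 : (2 * M i j) = M i j + M i j := by omega
  have hper : ∑ l ∈ Finset.range (M i j),
        (if t = ((s i * s j) ^ (M i j + l))⁻¹ * s j then (1 : ZMod 2) else 0)
      = ∑ l ∈ Finset.range (M i j),
        (if t = ((s i * s j) ^ l)⁻¹ * s j then (1 : ZMod 2) else 0) :=
    Finset.sum_congr rfl fun l _ => by
      rw [add_comm, pow_add, cs.simple_mul_simple_pow i j, mul_one]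
  rw [h2, Finset.sum_range_add, hper, CharTwo.add_self_eq_zero]
  simp

/-- Tits' sign representation. -/
noncomputable def eta : W →* Equiv.Perm (W × ZMod 2) :=
  cs.lift ⟨sigma cs, isLiftable cs⟩

lemma eta_simple (i : B) : eta cs (s i) = sigma cs i := cs.lift_apply_simple (isLiftable cs) i


lemma eta_apply (w t : W) (e : ZMod 2) :
    eta cs w (t, e) = (w * t * w⁻¹, e + (eta cs w (t, 0)).2) := by
  have key : ∀ ω : List B, ∀ t : W, ∀ e : ZMod 2,
      eta cs (π ω) (t, e) = ((π ω) * t * (π ω)⁻¹, e + (eta cs (π ω) (t, 0)).2) := by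
    intro ω
    induction ω with
    | nil => intro t e; simp
    | cons i ω ih =>
        intro t e
        rw [cs.wordProd_cons, map_mul, Equiv.Perm.mul_apply, Equiv.Perm.mul_apply,
          ih t e, ih t 0]
        simp only [eta_simple cs i, sigma_apply, zero_add]
        refine Prod.ext ?_ ?_
        · simp only
          rw [mul_inv_rev, cs.inv_simple]
          group
        · simp only
          ring
  obtain ⟨ω, -, rfl⟩ := cs.exists_reduced_word' w
  exact key ω t e

/-- The reflection-counting cocycle. -/
noncomputable def nn (w t : W) : ZMod 2 := (eta cs w⁻¹ (t, 0)).2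

lemma nn_one (t : W) : nn cs 1 t = 0 := by simp [nn]

lemma nn_mul (u v t : W) : nn cs (u * v) t = nn cs u t + nn cs v (u⁻¹ * t * u) := by
  unfold nn
  rw [mul_inv_rev, map_mul, Equiv.Perm.mul_apply]
  rw [eta_apply cs u⁻¹ t 0, inv_inv, zero_add]
  rw [eta_apply cs v⁻¹ _ _]

lemma nn_simple (i : B) (t : W) :
    nn cs (s i) t = if t = s i then 1 else 0 := by
  unfold nn
  rw [cs.inv_simple, eta_simple cs i, sigma_apply, zero_add]

lemma nn_wordProd (ω : List B) (t : W) :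
    nn cs (π ω) t = ((cs.leftInvSeq ω).count t : ZMod 2) := by
  induction ω generalizing t with
  | nil => simp [nn_one]
  | cons i ω ih =>
      rw [cs.wordProd_cons, nn_mul, nn_simple, ih]
      have h := cs.inv_simple i
      have hlis : cs.leftInvSeq (i :: ω)
          = s i :: List.map (MulAut.conj (s i)) (cs.leftInvSeq ω) := rfl
      rw [hlis, List.count_cons]
      have hsq : s i * s i = 1 := cs.simple_mul_simple_self i
      have hconj : (MulAut.conj (s i)) ((s i)⁻¹ * t * s i) = t := by
        rw [MulAut.conj_apply, h]
        exact sq_conj_eq_self hsq t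
      rw [show List.count t (List.map (⇑(MulAut.conj (s i))) (cs.leftInvSeq ω))
          = List.count ((s i)⁻¹ * t * s i) (cs.leftInvSeq ω) from by
        nth_rewrite 1 [← hconj]
        exact List.count_map_of_injective _ _ (MulEquiv.injective _) _]
      push_cast
      rcases eq_or_ne t (s i) with h' | h'
      · simp [h', add_comm]
      · rw [if_neg h', beq_eq_false_iff_ne.mpr (Ne.symm h')]
        simp [add_comm]

lemma nn_reflection {t : W} (ht : cs.IsReflection t) : nn cs t t = 1 := by
  obtain ⟨w, i, rfl⟩ := ht
  have h1 : nn cs (w * (s i * w⁻¹)) (w * s i * w⁻¹)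
      = nn cs w (w * s i * w⁻¹) + nn cs (s i) (w⁻¹ * (w * s i * w⁻¹) * w)
        + nn cs w⁻¹ ((s i)⁻¹ * (w⁻¹ * (w * s i * w⁻¹) * w) * s i) := by
    rw [nn_mul, nn_mul]; ring
  have h2 : w⁻¹ * (w * s i * w⁻¹) * w = s i := by group
  have h3 : (s i)⁻¹ * (w⁻¹ * (w * s i * w⁻¹) * w) * s i = s i := by
    rw [h2, cs.inv_simple, cs.simple_mul_simple_self, one_mul]
  have h4 : nn cs w (w * s i * w⁻¹) + nn cs w⁻¹ (s i) = 0 := by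
    have := nn_mul cs w w⁻¹ (w * s i * w⁻¹)
    rw [mul_inv_cancel, nn_one, h2] at this
    exact this.symm
  rw [← mul_assoc] at h1
  rw [h1, h3, h2, nn_simple, if_pos rfl, add_right_comm, h4, zero_add]

lemma lt_of_nn_eq_one {w t : W} (h : nn cs w t = 1) : ℓ (t * w) < ℓ w := by
  obtain ⟨ω, hred, rfl⟩ := cs.exists_reduced_word' w
  rw [nn_wordProd] at h
  have hmem : t ∈ cs.leftInvSeq ω := by
    by_contra hm
    rw [List.count_eq_zero_of_not_mem hm] at h
    simp at h
  exact (cs.isLeftInversion_of_mem_leftInvSeq hred hmem).2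

lemma nn_eq_one_of_lt {w t : W} (ht : cs.IsReflection t) (h : ℓ (t * w) < ℓ w) :
    nn cs w t = 1 := by
  have h0 : nn cs (t * w) t = 0 := by
    rcases (by decide : ∀ x : ZMod 2, x = 0 ∨ x = 1) (nn cs (t * w) t) with h1 | h1
    · exact h1
    · exfalso
      have := lt_of_nn_eq_one cs h1
      rw [← mul_assoc, ht.mul_self, one_mul] at this
      omega
  calc nn cs w t = nn cs (t * (t * w)) t := by rw [← mul_assoc, ht.mul_self, one_mul]
    _ = nn cs t t + nn cs (t * w) t := by
        rw [nn_mul]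
        congr 2
        rw [ht.inv, ht.mul_self, one_mul]
    _ = 1 := by rw [nn_reflection cs ht, h0, add_zero]

/-- Strong exchange, membership form. -/
lemma mem_leftInvSeq_of_isLeftInversion {ω : List B} (hred : cs.IsReduced ω) {t : W}
    (ht : cs.IsReflection t) (h : ℓ (t * π ω) < ℓ (π ω)) : t ∈ cs.leftInvSeq ω := by
  have h1 := nn_eq_one_of_lt cs ht h
  rw [nn_wordProd] at h1
  by_contra hm
  rw [List.count_eq_zero_of_not_mem hm] at h1
  simp at h1

/-- Deletion property: every word contains a reduced word for the same element. -/
lemma exists_reduced_word_subset (ω : List B) :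
    ∃ ω' : List B, cs.IsReduced ω' ∧ π ω' = π ω ∧ ∀ i ∈ ω', i ∈ ω := by
  classical
  generalize hn : ω.length = n
  induction n using Nat.strong_induction_on generalizing ω with
  | _ n ih =>
    by_cases hred : cs.IsReduced ω
    · exact ⟨ω, hred, rfl, fun i hi => hi⟩
    · have hex : ∃ k, ¬ cs.IsReduced (ω.take k) := ⟨ω.length, by rwa [List.take_length]⟩
      have hknr : ¬ cs.IsReduced (ω.take (Nat.find hex)) := Nat.find_spec hex
      have hkpos : Nat.find hex ≠ 0 := by
        intro h0
        rw [h0] at hknr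
        exact hknr (by simp [CoxeterSystem.IsReduced])
      obtain ⟨j, hj⟩ : ∃ j, Nat.find hex = j + 1 := ⟨Nat.find hex - 1, by omega⟩
      rw [hj] at hknr
      have hjred : cs.IsReduced (ω.take j) := by
        by_contra hc
        have : Nat.find hex ≤ j := Nat.find_le hc
        omega
      have hjlt : j < ω.length := by
        by_contra hc
        push_neg at hc
        apply hknr
        rw [List.take_of_length_le (le_trans hc (Nat.le_succ j))]
        rwa [List.take_of_length_le hc] at hjred
      have htake : ω.take (j+1) = ω.take j ++ [ω[j]] := by
        rw [List.take_succ, List.getElem?_eq_getElem hjlt]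
        rfl
      have hlenj : (ω.take j).length = j := by
        rw [List.length_take]
        omega
      have hπtake : π (ω.take (j+1)) = π (ω.take j) * s (ω[j]) := by
        rw [htake, cs.wordProd_append]
        congr 1
        simp [CoxeterSystem.wordProd]
      have hlt : ℓ (π (ω.take j) * s (ω[j])) < ℓ (π (ω.take j)) := by
        rcases cs.length_mul_simple (π (ω.take j)) (ω[j]) with hc | hc
        · exfalso
          apply hknr
          unfold CoxeterSystem.IsReduced
          rw [hπtake, hc, List.length_take, hjred, hlenj]
          omega
        · rw [hjred, hlenj] at hc ⊢
          omega
      set t := π (ω.take j) * s (ω[j]) * (π (ω.take j))⁻¹ with hteq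
      have htr : cs.IsReflection t := ⟨π (ω.take j), ω[j], rfl⟩
      have ht2 : t * π (ω.take j) = π (ω.take j) * s (ω[j]) := by
        rw [hteq]; group
      have hmem : t ∈ cs.leftInvSeq (ω.take j) := by
        apply mem_leftInvSeq_of_isLeftInversion cs hjred htr
        rw [ht2]
        exact hlt
      obtain ⟨kk, hkk, hgd⟩ := List.mem_iff_getElem.mp hmem
      rw [cs.length_leftInvSeq, hlenj] at hkk
      have herase : π (ω.take j) * s (ω[j]) = π ((ω.take j).eraseIdx kk) := by
        rw [← ht2, ← cs.getD_leftInvSeq_mul_wordProd (ω.take j) kk]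
        congr 1
        rw [List.getD_eq_getElem _ 1 (by rw [cs.length_leftInvSeq, hlenj]; exact hkk)]
        exact hgd.symm
      have hsplit : π ω = π ((ω.take j).eraseIdx kk ++ ω.drop (j+1)) := by
        conv_lhs => rw [← List.take_append_drop (j+1) ω]
        rw [cs.wordProd_append, cs.wordProd_append, hπtake, herase]
      have hlen'' : ((ω.take j).eraseIdx kk ++ ω.drop (j+1)).length < n := by
        rw [List.length_append, List.length_eraseIdx, hlenj, List.length_drop]
        simp only [hkk, if_pos]
        omega
      obtain ⟨ω', hred', hπ', hsub'⟩ :=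
        ih _ (by omega : ((ω.take j).eraseIdx kk ++ ω.drop (j+1)).length < n)
          ((ω.take j).eraseIdx kk ++ ω.drop (j+1)) rfl
      refine ⟨ω', hred', by rw [hπ', ← hsplit], fun b hb => ?_⟩
      rcases List.mem_append.mp (hsub' b hb) with hb' | hb'
      · exact List.mem_of_mem_take (List.mem_of_mem_eraseIdx hb')
      · exact List.mem_of_mem_drop hb'

lemma wordProd_mem_closure (I : Set B) (ω : List B) (hω : ∀ i ∈ ω, i ∈ I) :
    π ω ∈ Subgroup.closure (cs.simple '' I) := by
  induction ω with
  | nil => rw [cs.wordProd_nil]; exact one_mem _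
  | cons i ω ih =>
      rw [cs.wordProd_cons]
      exact mul_mem
        (Subgroup.subset_closure ⟨i, hω i List.mem_cons_self, rfl⟩)
        (ih fun b hb => hω b (List.mem_cons_of_mem _ hb))

lemma exists_word_over (I : Set B) {w : W} (hw : w ∈ Subgroup.closure (cs.simple '' I)) :
    ∃ ω : List B, (∀ i ∈ ω, i ∈ I) ∧ w = π ω := by
  induction hw using Subgroup.closure_induction with
  | mem x hx =>
      obtain ⟨i, hi, rfl⟩ := hx
      exact ⟨[i], by simpa using hi, by simp [cs.wordProd_cons, cs.wordProd_nil]⟩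
  | one => exact ⟨[], by simp, by simp [cs.wordProd_nil]⟩
  | mul x y _ _ hx hy =>
      obtain ⟨ω₁, h1, rfl⟩ := hx
      obtain ⟨ω₂, h2, rfl⟩ := hy
      exact ⟨ω₁ ++ ω₂, fun i hi => (List.mem_append.mp hi).elim (h1 i) (h2 i),
        (cs.wordProd_append ω₁ ω₂).symm⟩
  | inv x _ hx =>
      obtain ⟨ω₁, h1, rfl⟩ := hx
      exact ⟨ω₁.reverse, fun i hi => h1 i (List.mem_reverse.mp hi),
        (cs.wordProd_reverse ω₁).symm⟩

lemma leftInvSeq_mem_closure (I : Set B) (ω : List B) (hω : ∀ i ∈ ω, i ∈ I) :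
    ∀ t ∈ cs.leftInvSeq ω, t ∈ Subgroup.closure (cs.simple '' I) := by
  induction ω with
  | nil => simp
  | cons i ω ih =>
      intro t ht
      have hlis : cs.leftInvSeq (i :: ω)
          = s i :: List.map (MulAut.conj (s i)) (cs.leftInvSeq ω) := rfl
      rw [hlis, List.mem_cons] at ht
      have hsi : s i ∈ Subgroup.closure (cs.simple '' I) :=
        Subgroup.subset_closure ⟨i, hω i List.mem_cons_self, rfl⟩
      rcases ht with rfl | ht
      · exact hsi
      · obtain ⟨v, hv, rfl⟩ := List.mem_map.mp ht
        have hvP := ih (fun b hb => hω b (List.mem_cons_of_mem _ hb)) v hv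
        rw [MulAut.conj_apply]
        exact mul_mem (mul_mem hsi hvP) (inv_mem hsi)

end SEAux

end SEAuxSection

/-- A one-sided coset `W_I x` is `ℓ(w₀(I))`-regular as a Bruhat graph. -/
theorem coset_regular [Finite W]
    (cs : CoxeterSystem M W) (I : Set B) (x : W) (w₀I : W)
    (hmem : w₀I ∈ parabolic cs I)
    (hlong : ∀ u ∈ parabolic cs I, cs.length u ≤ cs.length w₀I) :
    ∀ y ∈ {z : W | ∃ u ∈ parabolic cs I, z = u * x},
      Set.ncard {z ∈ {z : W | ∃ u ∈ parabolic cs I, z = u * x} |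
          bruhatEdge cs y z ∨ bruhatEdge cs z y} = cs.length w₀I := by
  classical
  rintro y ⟨u, huP, rfl⟩
  obtain ⟨ω₀, hω₀I, hw0⟩ := SEAux.exists_word_over cs I hmem
  obtain ⟨ω, hred, hπ, hsub⟩ := SEAux.exists_reduced_word_subset cs ω₀
  have hπw : cs.wordProd ω = w₀I := by rw [hπ, ← hw0]
  have hωI : ∀ i ∈ ω, i ∈ I := fun i hi => hω₀I i (hsub i hi)
  set R : Set W := {t | cs.IsReflection t ∧ t ∈ parabolic cs I} with hRdef
  have hR : R = {t | t ∈ cs.leftInvSeq ω} := by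
    ext t
    constructor
    · rintro ⟨htr, htP⟩
      apply SEAux.mem_leftInvSeq_of_isLeftInversion cs hred htr
      rw [hπw]
      exact lt_of_le_of_ne (hlong _ (mul_mem htP hmem)) (htr.length_mul_right_ne w₀I)
    · intro ht
      exact ⟨cs.isReflection_of_mem_leftInvSeq ω ht,
        SEAux.leftInvSeq_mem_closure cs I ω hωI t ht⟩
  have hRcard : R.ncard = cs.length w₀I := by
    rw [hR]
    have hμ : {t | t ∈ cs.leftInvSeq ω} = ↑(cs.leftInvSeq ω).toFinset := by ext t; simp
    rw [hμ, Set.ncard_coe_finset, List.toFinset_card_of_nodup hred.nodup_leftInvSeq,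
      cs.length_leftInvSeq, ← hπw, hred]
  have hset : {z ∈ {z : W | ∃ u ∈ parabolic cs I, z = u * x} |
        bruhatEdge cs (u * x) z ∨ bruhatEdge cs z (u * x)}
      = (fun t => t * (u * x)) '' R := by
    ext z
    simp only [Set.mem_sep_iff, Set.mem_setOf_eq, Set.mem_image, hRdef]
    constructor
    · rintro ⟨⟨u', hu'P, rfl⟩, hedge⟩
      rcases hedge with ⟨t, htr, heq, _⟩ | ⟨t, htr, heq, _⟩
      · refine ⟨t, ⟨htr, ?_⟩, heq.symm⟩
        have htu : t = u' * u⁻¹ := by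
          have h1 : t = (u' * x) * (u * x)⁻¹ := by rw [heq]; group
          rw [h1]; group
        rw [htu]; exact mul_mem hu'P (inv_mem huP)
      · refine ⟨t, ⟨htr, ?_⟩, ?_⟩
        · have htu : t = u * u'⁻¹ := by
            have h1 : t = (u * x) * (u' * x)⁻¹ := by rw [heq]; group
            rw [h1]; group
          rw [htu]; exact mul_mem huP (inv_mem hu'P)
        · rw [heq, ← mul_assoc, htr.mul_self, one_mul]
    · rintro ⟨t, ⟨htr, htP⟩, rfl⟩
      refine ⟨⟨t * u, mul_mem htP huP, by group⟩, ?_⟩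
      rcases lt_or_gt_of_ne (htr.length_mul_right_ne (u * x)) with hlt | hgt
      · exact Or.inr ⟨t, htr, by rw [← mul_assoc, htr.mul_self, one_mul], hlt⟩
      · exact Or.inl ⟨t, htr, rfl, hgt⟩
  rw [hset, Set.ncard_image_of_injective R (mul_left_injective (u * x)), hRcard]
end
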